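/- arXiv:1301.1038 — 8 statements merged into one kernel-verified Lean document; each statement's English description precedes it below -/
import Mathlib

section
/- Let (S,T) be a Cuntz-type representation of F_θ^+ on H (m ≥ 2 or n ≥ 2). For k,l > 0 let V = P_{k,l}H be the range of the structure projection of the row-isometry [S_uT_v : |u|=k, |v|=l], i.e. the orthogonal complement of the closed linear span of its wandering vectors. Then V is invariant under S_i* for every i and under T_j* for every j. Consequently, the range PH of the first structure projection P = ⋀_{k,l>0} P_{k,l} is invariant under A* for every A in the nonself-adjoint 2-graph algebra 𝔖. -/
noncomputable section

open scoped InnerProductSpace ComplexInnerProductSpace Classical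

section GeneralDefs

variable {E : Type*} [NormedAddCommGroup E] [InnerProductSpace ℂ E]

/-- The operator associated to a word: `wordOp V [a₁, …, a_r] = V a₁ * ⋯ * V a_r`. -/
def wordOp {ι : Type*} (V : ι → E →L[ℂ] E) (w : List ι) : E →L[ℂ] E :=
  (w.map V).prod

/-- The operator associated to a word of fixed length `k` given as a function `Fin k → ι`. -/
def fnWordOp {ι : Type*} {k : ℕ} (V : ι → E →L[ℂ] E) (u : Fin k → ι) : E →L[ℂ] E :=
  wordOp V (List.ofFn u)

/-- The closure of a set of operators in the weak operator topology, described via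
basic WOT-neighbourhoods (finitely many vector functionals). -/
def wotClosure (S : Set (E →L[ℂ] E)) : Set (E →L[ℂ] E) :=
  {A | ∀ ε > (0 : ℝ), ∀ F : Finset (E × E), ∃ B ∈ S, ∀ p ∈ F, ‖⟪p.1, (A - B) p.2⟫‖ < ε}

/-- The unital WOT-closed algebra generated by a set of operators. -/
def genWotAlg (G : Set (E →L[ℂ] E)) : Set (E →L[ℂ] E) :=
  wotClosure ((Algebra.adjoin ℂ G : Subalgebra ℂ (E →L[ℂ] E)) : Set (E →L[ℂ] E))

/-- A wandering vector for a row-isometry `V = [V_a : a ∈ ι]`: a unit vector whose orbit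
under all words in the `V_a` is an orthonormal family. -/
def IsWandering {ι : Type*} (V : ι → E →L[ℂ] E) (ζ : E) : Prop :=
  ‖ζ‖ = 1 ∧ ∀ w w' : List ι,
    ⟪wordOp V w ζ, wordOp V w' ζ⟫ = if w = w' then 1 else 0

/-- Restriction of an operator to an invariant subspace (junk value `0` if not invariant). -/
def restrictCLM (A : E →L[ℂ] E) (M : Submodule ℂ E) : M →L[ℂ] M :=
  if h : ∀ x ∈ M, A x ∈ M then
    { toFun := fun x => ⟨A x, h x x.2⟩
      map_add' := by intro x y; ext; simp
      map_smul' := by intro c x; ext; simp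
      cont := Continuous.subtype_mk (A.continuous.comp continuous_subtype_val) _ }
  else 0

/-- The unital WOT-closed algebra on `M` generated by the restrictions of the `V a` to `M`. -/
def rowAlgOn {ι : Type*} (V : ι → E →L[ℂ] E) (M : Submodule ℂ E) : Set (M →L[ℂ] M) :=
  genWotAlg (Set.range fun a => restrictCLM (V a) M)

/-- The unital WOT-closed algebra on `M` generated by the restrictions of the `V a`
is self-adjoint. -/
def restrictedAlgSelfAdjoint {ι : Type*} (V : ι → E →L[ℂ] E) (M : Submodule ℂ E) : Prop :=
  ∀ A ∈ rowAlgOn V M, ∃ B ∈ rowAlgOn V M,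
    ∀ x y : M, ⟪((A x : M) : E), (y : E)⟫ = ⟪(x : E), ((B y : M) : E)⟫

variable [CompleteSpace E]

/-- A row-isometry is of dilation type if it is defect free and has no nonzero reducing
subspace on which it is either absolutely continuous (spanned by wandering vectors) or
singular (generating a self-adjoint WOT-closed algebra). -/
def IsDilationType {ι : Type*} [Fintype ι] (V : ι → E →L[ℂ] E) : Prop :=
  (∑ a, V a * star (V a)) = 1 ∧
    ¬ ∃ M : Submodule ℂ E, M ≠ ⊥ ∧ IsClosed (M : Set E) ∧
      (∀ a, ∀ x ∈ M, V a x ∈ M) ∧ (∀ a, ∀ x ∈ M, star (V a) x ∈ M) ∧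
      ((M = (Submodule.span ℂ {ζ : E | ζ ∈ M ∧ IsWandering V ζ}).topologicalClosure) ∨
        restrictedAlgSelfAdjoint V M)

end GeneralDefs

/-- An isometric representation of the single-vertex 2-graph `F_θ⁺` on a Hilbert space `H`. -/
structure TwoGraphRep (m n : ℕ) (θ : Equiv.Perm (Fin m × Fin n)) (H : Type*)
    [NormedAddCommGroup H] [InnerProductSpace ℂ H] [CompleteSpace H] where
  S : Fin m → H →L[ℂ] H
  T : Fin n → H →L[ℂ] H
  isometS : ∀ i i', star (S i) * S i' = if i = i' then 1 else 0
  isometT : ∀ j j', star (T j) * T j' = if j = j' then 1 else 0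
  comm : ∀ i j, S i * T j = T (θ (i, j)).2 * S (θ (i, j)).1

namespace TwoGraphRep

variable {m n : ℕ} {θ : Equiv.Perm (Fin m × Fin n)} {H : Type*}
  [NormedAddCommGroup H] [InnerProductSpace ℂ H] [CompleteSpace H]

/-- A representation is of Cuntz type if both row-isometries are defect free. -/
def CuntzType (ρ : TwoGraphRep m n θ H) : Prop :=
  (∑ i, ρ.S i * star (ρ.S i)) = 1 ∧ (∑ j, ρ.T j * star (ρ.T j)) = 1

/-- The nonself-adjoint 2-graph algebra `𝔖`: the unital WOT-closed algebra generated by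
the `S_i` and `T_j`. -/
def alg (ρ : TwoGraphRep m n θ H) : Set (H →L[ℂ] H) :=
  genWotAlg (Set.range ρ.S ∪ Set.range ρ.T)

/-- The von Neumann algebra generated by the `S_i` and `T_j`: the WOT-closure of the
unital *-algebra they generate. -/
def vnAlg (ρ : TwoGraphRep m n θ H) : Set (H →L[ℂ] H) :=
  genWotAlg ((Set.range ρ.S ∪ Set.range ρ.T) ∪ star '' (Set.range ρ.S ∪ Set.range ρ.T))

/-- Wandering vector for the row-isometry `[S_u T_v : |u| = k, |v| = l]`. -/
def IsWanderingKL (ρ : TwoGraphRep m n θ H) (k l : ℕ) (ζ : H) : Prop :=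
  ‖ζ‖ = 1 ∧ ∀ (p p' : ℕ) (u u' : List (Fin m)) (v v' : List (Fin n)),
    u.length = p * k → v.length = p * l → u'.length = p' * k → v'.length = p' * l →
    ⟪(wordOp ρ.S u * wordOp ρ.T v) ζ, (wordOp ρ.S u' * wordOp ρ.T v') ζ⟫ =
      if u = u' ∧ v = v' then 1 else 0

/-- The range of the structure projection `P_{k,l}`: the orthogonal complement of the
closed linear span of the wandering vectors of `[S_u T_v : |u| = k, |v| = l]`. -/
def structSpaceKL (ρ : TwoGraphRep m n θ H) (k l : ℕ) : Submodule ℂ H :=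
  ((Submodule.span ℂ {ζ : H | ρ.IsWanderingKL k l ζ}).topologicalClosure)ᗮ

/-- The range of the first structure projection `P = ⋀_{k,l>0} P_{k,l}`. -/
def firstStructSpace (ρ : TwoGraphRep m n θ H) : Submodule ℂ H :=
  ⨅ (k : ℕ) (l : ℕ) (_ : 0 < k) (_ : 0 < l), ρ.structSpaceKL k l

/-- The row-isometry `[S_u T_v : |u| = k, |v| = l]`. -/
def rowKL (ρ : TwoGraphRep m n θ H) (k l : ℕ) :
    ((Fin k → Fin m) × (Fin l → Fin n)) → H →L[ℂ] H :=
  fun p => fnWordOp ρ.S p.1 * fnWordOp ρ.T p.2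

/-- A wandering vector for the representation `(S,T)`. -/
def IsWanderingRep (ρ : TwoGraphRep m n θ H) (ζ : H) : Prop :=
  ‖ζ‖ = 1 ∧ ∀ (u u' : List (Fin m)) (v v' : List (Fin n)),
    ⟪(wordOp ρ.S u * wordOp ρ.T v) ζ, (wordOp ρ.S u' * wordOp ρ.T v') ζ⟫ =
      if u = u' ∧ v = v' then 1 else 0

/-- The representation is irreducible: the only closed subspaces invariant under all
`S_i, T_j, S_i*, T_j*` are `⊥` and `⊤`. -/
def Irreducible (ρ : TwoGraphRep m n θ H) : Prop :=
  ∀ M : Submodule ℂ H, IsClosed (M : Set H) →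
    (∀ i, ∀ x ∈ M, ρ.S i x ∈ M) → (∀ i, ∀ x ∈ M, star (ρ.S i) x ∈ M) →
    (∀ j, ∀ x ∈ M, ρ.T j x ∈ M) → (∀ j, ∀ x ∈ M, star (ρ.T j) x ∈ M) →
    M = ⊥ ∨ M = ⊤

/-- The representation is atomic with standard basis `ξ`: every generator maps each basis
vector to a unimodular multiple of a basis vector. -/
def AtomicBasis {Λ : Type*} (ρ : TwoGraphRep m n θ H) (ξ : HilbertBasis Λ ℂ H) : Prop :=
  (∀ i t, ∃ (c : ℂ) (t' : Λ), ‖c‖ = 1 ∧ ρ.S i (ξ t) = c • ξ t') ∧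
  (∀ j t, ∃ (c : ℂ) (t' : Λ), ‖c‖ = 1 ∧ ρ.T j (ξ t) = c • ξ t')

/-- `x` has a blue ring: `S_u x ∈ 𝕋x` for some nonempty word `u`. -/
def HasBlueRing (ρ : TwoGraphRep m n θ H) (x : H) : Prop :=
  ∃ u : List (Fin m), u ≠ [] ∧ ∃ c : ℂ, ‖c‖ = 1 ∧ wordOp ρ.S u x = c • x

/-- `x` has a red ring: `T_v x ∈ 𝕋x` for some nonempty word `v`. -/
def HasRedRing (ρ : TwoGraphRep m n θ H) (x : H) : Prop :=
  ∃ v : List (Fin n), v ≠ [] ∧ ∃ c : ℂ, ‖c‖ = 1 ∧ wordOp ρ.T v x = c • x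

/-- `x` has a mixed ring: `T_v S_u x ∈ 𝕋x` for some nonempty words `u`, `v`. -/
def HasMixedRing (ρ : TwoGraphRep m n θ H) (x : H) : Prop :=
  ∃ (u : List (Fin m)) (v : List (Fin n)), u ≠ [] ∧ v ≠ [] ∧
    ∃ c : ℂ, ‖c‖ = 1 ∧ wordOp ρ.T v (wordOp ρ.S u x) = c • x

end TwoGraphRep
namespace StructAux

open scoped InnerProductSpace ComplexInnerProductSpace Classical

variable {E : Type*} [NormedAddCommGroup E] [InnerProductSpace ℂ E]

lemma wordOp_nil {ι : Type*} (V : ι → E →L[ℂ] E) : wordOp V [] = 1 := rfl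

lemma wordOp_cons {ι : Type*} (V : ι → E →L[ℂ] E) (a : ι) (w : List ι) :
    wordOp V (a :: w) = V a * wordOp V w := by
  simp [wordOp]

lemma wordOp_append {ι : Type*} (V : ι → E →L[ℂ] E) (w w' : List ι) :
    wordOp V (w ++ w') = wordOp V w * wordOp V w' := by
  simp [wordOp]

lemma wordOp_singleton {ι : Type*} (V : ι → E →L[ℂ] E) (a : ι) :
    wordOp V [a] = V a := by
  simp [wordOp]

variable [CompleteSpace E]

/-- strip lemma for isometries with pairwise orthogonal ranges -/
lemma strip {ι : Type*} [DecidableEq ι] (V : ι → E →L[ℂ] E)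
    (horth : ∀ a a', star (V a) * V a' = if a = a' then 1 else 0) :
    ∀ (w w' : List ι), w.length ≤ w'.length →
      star (wordOp V w) * wordOp V w' =
        if w = w'.take w.length then wordOp V (w'.drop w.length) else 0
  | [], w', _ => by simp [wordOp_nil]
  | a :: t, [], h => by simp at h
  | a :: t, b :: t', h => by
      have ht : t.length ≤ t'.length := by simpa using h
      have ih := strip V horth t t' ht
      rw [wordOp_cons, wordOp_cons, star_mul]
      have h1 : star (wordOp V t) * star (V a) * (V b * wordOp V t')
           = star (wordOp V t) * ((star (V a) * V b) * wordOp V t') := by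
        simp [mul_assoc]
      rw [h1, horth]
      by_cases hab : a = b
      · subst hab
        simp [ih, List.take_succ_cons, List.drop_succ_cons]
      · simp [hab]

lemma strip_eq_one {ι : Type*} [DecidableEq ι] (V : ι → E →L[ℂ] E)
    (horth : ∀ a a', star (V a) * V a' = if a = a' then 1 else 0) (w : List ι) :
    star (wordOp V w) * wordOp V w = 1 := by
  rw [strip V horth w w le_rfl]
  simp [wordOp_nil]

lemma strip_eq_zero {ι : Type*} [DecidableEq ι] (V : ι → E →L[ℂ] E)
    (horth : ∀ a a', star (V a) * V a' = if a = a' then 1 else 0) {w w' : List ι}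
    (hlen : w.length = w'.length) (hne : w ≠ w') :
    star (wordOp V w) * wordOp V w' = 0 := by
  rw [strip V horth w w' hlen.le]
  rw [hlen, List.take_length]
  simp [hne]

lemma fnWordOp_zero {ι : Type*} (V : ι → E →L[ℂ] E) (u : Fin 0 → ι) :
    fnWordOp V u = 1 := by simp [fnWordOp, wordOp]

lemma fnWordOp_cons {ι : Type*} (V : ι → E →L[ℂ] E) {r : ℕ} (a : ι) (u : Fin r → ι) :
    fnWordOp V (Fin.cons a u) = V a * fnWordOp V u := by
  simp only [fnWordOp, List.ofFn_succ, Fin.cons_zero, Fin.cons_succ, wordOp_cons]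

lemma cuntzWordSum {ι : Type*} [Fintype ι] (V : ι → E →L[ℂ] E)
    (h : ∑ a, V a * star (V a) = 1) (r : ℕ) :
    ∑ u : Fin r → ι, fnWordOp V u * star (fnWordOp V u) = 1 := by
  induction r with
  | zero =>
      simp [fnWordOp_zero]
  | succ r ih =>
      classical
      let e : ι × (Fin r → ι) ≃ (Fin (r+1) → ι) := Fin.consEquiv (fun _ => ι)
      rw [← e.sum_comp (fun u => fnWordOp V u * star (fnWordOp V u))]
      have : ∀ p : ι × (Fin r → ι),
          fnWordOp V (e p) * star (fnWordOp V (e p))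
            = V p.1 * ((fnWordOp V p.2 * star (fnWordOp V p.2)) * star (V p.1)) := by
        intro p
        have he : e p = Fin.cons p.1 p.2 := rfl
        rw [he, fnWordOp_cons, star_mul]
        simp [mul_assoc]
      rw [Finset.sum_congr rfl fun p _ => this p, Fintype.sum_prod_type]
      have : ∀ a : ι, ∑ u : Fin r → ι,
          V a * ((fnWordOp V u * star (fnWordOp V u)) * star (V a)) = V a * star (V a) := by
        intro a
        rw [← Finset.mul_sum, ← Finset.sum_mul, ih, one_mul]
      rw [Finset.sum_congr rfl fun a _ => this a, h]

end StructAux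

namespace StructAux

open scoped InnerProductSpace ComplexInnerProductSpace Classical

variable {m n : ℕ} {θ : Equiv.Perm (Fin m × Fin n)} {H : Type*}
  [NormedAddCommGroup H] [InnerProductSpace ℂ H] [CompleteSpace H] (ρ : TwoGraphRep m n θ H)

lemma comm_single (j : Fin n) (i : Fin m) :
    ∃ (i' : Fin m) (j' : Fin n), ρ.T j * ρ.S i = ρ.S i' * ρ.T j' := by
  refine ⟨(θ.symm (i, j)).1, (θ.symm (i, j)).2, ?_⟩
  have := ρ.comm (θ.symm (i, j)).1 (θ.symm (i, j)).2
  rw [show ((θ.symm (i,j)).1, (θ.symm (i,j)).2) = θ.symm (i,j) from rfl] at this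
  rw [Equiv.apply_symm_apply] at this
  exact this.symm

lemma comm_word1 (j : Fin n) (u : List (Fin m)) :
    ∃ (u' : List (Fin m)) (j' : Fin n), u'.length = u.length ∧
      ρ.T j * wordOp ρ.S u = wordOp ρ.S u' * ρ.T j' := by
  induction u generalizing j with
  | nil => exact ⟨[], j, rfl, by simp [wordOp_nil]⟩
  | cons i t ih =>
      obtain ⟨i', j₁, hc⟩ := comm_single ρ j i
      obtain ⟨t', j', hlen, ht⟩ := ih j₁
      refine ⟨i' :: t', j', by simp [hlen], ?_⟩
      rw [wordOp_cons, wordOp_cons, ← mul_assoc, hc, mul_assoc, ht, ← mul_assoc]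

lemma comm_word (x : List (Fin n)) (u : List (Fin m)) :
    ∃ (u' : List (Fin m)) (x' : List (Fin n)), u'.length = u.length ∧ x'.length = x.length ∧
      wordOp ρ.T x * wordOp ρ.S u = wordOp ρ.S u' * wordOp ρ.T x' := by
  induction x with
  | nil => exact ⟨u, [], rfl, rfl, by simp [wordOp_nil]⟩
  | cons j t ih =>
      obtain ⟨u₁, t', hl1, hl2, h1⟩ := ih
      obtain ⟨u', j', hl3, h2⟩ := comm_word1 ρ j u₁
      refine ⟨u', j' :: t', hl3.trans hl1, by simp [hl2], ?_⟩
      rw [wordOp_cons, mul_assoc, h1, ← mul_assoc, h2, wordOp_cons, mul_assoc]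

/-- Key vanishing lemma. -/
lemma keyLemma (hC : (∑ i, ρ.S i * star (ρ.S i)) = 1) {k l : ℕ} (hk : 0 < k) (hl : 0 < l)
    {ζ : H} (hζ : ρ.IsWanderingKL k l ζ) {q : ℕ} (hq : 0 < q)
    (x y : List (Fin n)) (w : List (Fin m))
    (hw : w.length = q * k) (hy : y.length = x.length + q * l) :
    ⟪wordOp ρ.T x ζ, (wordOp ρ.S w * wordOp ρ.T y) ζ⟫ = 0 := by
  classical
  have hcs := cuntzWordSum ρ.S hC (q * k)
  have hzeta : ζ = ∑ u : Fin (q * k) → Fin m,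
      fnWordOp ρ.S u (star (fnWordOp ρ.S u) ζ) := by
    conv_lhs => rw [show ζ = (1 : H →L[ℂ] H) ζ from rfl, ← hcs]
    simp [ContinuousLinearMap.sum_apply, ContinuousLinearMap.mul_apply]
  rw [show wordOp ρ.T x ζ = ∑ u : Fin (q * k) → Fin m,
      wordOp ρ.T x (fnWordOp ρ.S u (star (fnWordOp ρ.S u) ζ)) by
    conv_lhs => rw [hzeta]
    rw [map_sum]]
  rw [sum_inner]
  refine Finset.sum_eq_zero fun u _ => ?_
  set η := star (fnWordOp ρ.S u) ζ with hη
  obtain ⟨u', x', hlu', hlx', hcw⟩ := comm_word ρ x (List.ofFn u)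
  have hterm : wordOp ρ.T x (fnWordOp ρ.S u η) = wordOp ρ.S u' (wordOp ρ.T x' η) := by
    have := congrArg (fun A : H →L[ℂ] H => A η) hcw
    simpa [ContinuousLinearMap.mul_apply, fnWordOp] using this
  rw [hterm]
  have hadj : ∀ (A : H →L[ℂ] H) (a b : H), ⟪A a, b⟫ = ⟪a, star A b⟫ := by
    intro A a b
    rw [ContinuousLinearMap.star_eq_adjoint, ContinuousLinearMap.adjoint_inner_right]
  rw [hadj]
  have hlen1 : u'.length = q * k := by simp [hlu']
  by_cases huw : u' = w
  · subst huw
    have h1 : star (wordOp ρ.S u') * (wordOp ρ.S u' * wordOp ρ.T y)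
        = wordOp ρ.T y := by
      rw [← mul_assoc, strip_eq_one ρ.S ρ.isometS u', one_mul]
    rw [show star (wordOp ρ.S u') ((wordOp ρ.S u' * wordOp ρ.T y) ζ)
        = wordOp ρ.T y ζ by
      have := congrArg (fun A : H →L[ℂ] H => A ζ) h1
      simpa [ContinuousLinearMap.mul_apply] using this]
    -- now ⟪ T_{x'} η, T_y ζ ⟫
    have hsplit : y = y.take x'.length ++ y.drop x'.length := (List.take_append_drop _ _).symm
    rw [hadj]
    have hst := strip ρ.T ρ.isometT x' y (by omega)
    by_cases hpre : x' = y.take x'.length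
    · rw [show star (wordOp ρ.T x') (wordOp ρ.T y ζ)
          = wordOp ρ.T (y.drop x'.length) ζ by
        have := congrArg (fun A : H →L[ℂ] H => A ζ) hst
        simp only [if_pos hpre] at this
        simpa [ContinuousLinearMap.mul_apply] using this]
      have hd : (y.drop x'.length).length = q * l := by
        simp [hlx']; omega
      -- ⟪ η, T_{y₂} ζ ⟫ = ⟪ star (S_u) ζ, T_{y₂} ζ ⟫ = ⟪ ζ, S_u T_{y₂} ζ ⟫ = 0
      rw [hη, show ⟪(star (fnWordOp ρ.S u)) ζ, wordOp ρ.T (y.drop x'.length) ζ⟫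
          = ⟪ζ, fnWordOp ρ.S u (wordOp ρ.T (y.drop x'.length) ζ)⟫ by
        rw [ContinuousLinearMap.star_eq_adjoint, ContinuousLinearMap.adjoint_inner_left]]
      have := hζ.2 0 q [] (List.ofFn u) [] (y.drop x'.length)
        (by simp) (by simp) (by simp [hw]) (by simpa using hd)
      have hne : List.ofFn u ≠ [] := by
        intro hcon
        have : (List.ofFn u).length = 0 := by rw [hcon]; rfl
        simp at this; omega
      simpa [wordOp_nil, ContinuousLinearMap.mul_apply, fnWordOp,
        hne, Ne.symm hne] using this
    · rw [show star (wordOp ρ.T x') (wordOp ρ.T y ζ) = 0 by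
        have := congrArg (fun A : H →L[ℂ] H => A ζ) hst
        simp only [if_neg hpre] at this
        simpa [ContinuousLinearMap.mul_apply] using this]
      simp
  · have h0 : star (wordOp ρ.S u') * (wordOp ρ.S w * wordOp ρ.T y) = 0 := by
      rw [← mul_assoc, strip_eq_zero ρ.S ρ.isometS (by rw [hlen1, hw]) huw, zero_mul]
    rw [show star (wordOp ρ.S u') ((wordOp ρ.S w * wordOp ρ.T y) ζ) = 0 by
      have := congrArg (fun A : H →L[ℂ] H => A ζ) h0
      simpa [ContinuousLinearMap.mul_apply] using this]
    simp

end StructAux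

namespace StructAux

open scoped InnerProductSpace ComplexInnerProductSpace Classical

variable {m n : ℕ} {θ : Equiv.Perm (Fin m × Fin n)} {H : Type*}
  [NormedAddCommGroup H] [InnerProductSpace ℂ H] [CompleteSpace H] (ρ : TwoGraphRep m n θ H)

lemma adj_inner (A : H →L[ℂ] H) (a b : H) : ⟪A a, b⟫ = ⟪a, star A b⟫ := by
  rw [ContinuousLinearMap.star_eq_adjoint, ContinuousLinearMap.adjoint_inner_right]

lemma adj_inner' (A : H →L[ℂ] H) (a b : H) : ⟪star A a, b⟫ = ⟪a, A b⟫ := by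
  rw [ContinuousLinearMap.star_eq_adjoint, ContinuousLinearMap.adjoint_inner_left]

/-- The `p < p'` cross terms vanish, for ξ = wordOp T c (S-or-T-letter applied to ζ)
    in the common generalized form: ξ := any vector such that
    wordOp T v ξ = wordOp S a (wordOp T x ζ) with controlled lengths.  We instead prove the
    two concrete cases directly. -/
lemma wander_lt_aux (hC : (∑ i, ρ.S i * star (ρ.S i)) = 1) {k l : ℕ} (hk : 0 < k) (hl : 0 < l)
    {ζ : H} (hζ : ρ.IsWanderingKL k l ζ) {p p' q : ℕ} (hq : 0 < q) (hp' : p' = p + q)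
    (u u' : List (Fin m)) (hu : u.length = p * k) (hu' : u'.length = p' * k)
    (X Y : H) (a b : List (Fin m)) (x y : List (Fin n))
    (ha : a.length = b.length) (hX : X = wordOp ρ.S a (wordOp ρ.T x ζ))
    (hY : Y = wordOp ρ.S b (wordOp ρ.T y ζ))
    (hxy : y.length = x.length + q * l) :
    ⟪wordOp ρ.S u X, wordOp ρ.S u' Y⟫ = 0 := by
  classical
  have hu'2 : u'.length = p * k + q * k := by rw [hu', hp', add_mul]
  rw [adj_inner]
  have hle : u.length ≤ u'.length := by omega
  have hst := strip ρ.S ρ.isometS u u' hle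
  have happ : star (wordOp ρ.S u) (wordOp ρ.S u' Y)
      = (star (wordOp ρ.S u) * wordOp ρ.S u') Y := rfl
  rw [happ, hst]
  by_cases hpre : u = u'.take u.length
  · rw [if_pos hpre]
    set u₂ := u'.drop u.length with hu₂
    have hu₂l : u₂.length = q * k := by
      rw [hu₂, List.length_drop]; omega
    rw [hY]
    have hcombine : wordOp ρ.S u₂ (wordOp ρ.S b (wordOp ρ.T y ζ))
        = wordOp ρ.S (u₂ ++ b) (wordOp ρ.T y ζ) := by
      rw [wordOp_append]; rfl
    rw [hX, hcombine, adj_inner]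
    have hle2 : a.length ≤ (u₂ ++ b).length := by
      rw [List.length_append]; omega
    have hst2 := strip ρ.S ρ.isometS a (u₂ ++ b) hle2
    have happ2 : star (wordOp ρ.S a) (wordOp ρ.S (u₂ ++ b) (wordOp ρ.T y ζ))
        = (star (wordOp ρ.S a) * wordOp ρ.S (u₂ ++ b)) (wordOp ρ.T y ζ) := rfl
    rw [happ2, hst2]
    by_cases hpre2 : a = (u₂ ++ b).take a.length
    · rw [if_pos hpre2]
      have hw : ((u₂ ++ b).drop a.length).length = q * k := by
        rw [List.length_drop, List.length_append]; omega
      have := keyLemma ρ hC hk hl hζ hq x y ((u₂ ++ b).drop a.length) hw hxy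
      simpa [ContinuousLinearMap.mul_apply] using this
    · rw [if_neg hpre2]; simp
  · rw [if_neg hpre]; simp

lemma wander_S (hC : (∑ i, ρ.S i * star (ρ.S i)) = 1) {k l : ℕ} (hk : 0 < k) (hl : 0 < l)
    {ζ : H} (hζ : ρ.IsWanderingKL k l ζ) (i : Fin m) : ρ.IsWanderingKL k l (ρ.S i ζ) := by
  classical
  have hself : ⟪ρ.S i ζ, ρ.S i ζ⟫ = 1 := by
    rw [adj_inner]
    have h1 : star (ρ.S i) (ρ.S i ζ) = (star (ρ.S i) * ρ.S i) ζ := rfl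
    rw [h1, ρ.isometS i i, if_pos rfl, ContinuousLinearMap.one_apply,
      inner_self_eq_norm_sq_to_K, hζ.1]
    norm_num
  have hnorm : ‖ρ.S i ζ‖ = 1 := by
    have h2 := hself
    rw [inner_self_eq_norm_sq_to_K] at h2
    have h3 : ‖ρ.S i ζ‖ ^ 2 = 1 := by
      simpa [← Complex.ofReal_pow, Complex.ofReal_re] using congrArg Complex.re h2
    nlinarith [norm_nonneg (ρ.S i ζ)]
  -- commutation data : T_v (S_i ζ) = S_a (T_x ζ)
  have hcd : ∀ (v : List (Fin n)), ∃ (a : List (Fin m)) (x : List (Fin n)),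
      a.length = 1 ∧ x.length = v.length ∧
      wordOp ρ.T v (ρ.S i ζ) = wordOp ρ.S a (wordOp ρ.T x ζ) := by
    intro v
    obtain ⟨a, x, hal, hxl, hcw⟩ := comm_word ρ v [i]
    refine ⟨a, x, by simpa using hal, hxl, ?_⟩
    have := congrArg (fun A : H →L[ℂ] H => A ζ) hcw
    simpa [ContinuousLinearMap.mul_apply, wordOp_singleton] using this
  refine ⟨hnorm, ?_⟩
  intro p p' u u' v v' hu hv hu' hv'
  simp only [ContinuousLinearMap.mul_apply]
  rcases Nat.lt_trichotomy p p' with hlt | heq | hgt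
  · obtain ⟨q, hq, rfl⟩ : ∃ q, 0 < q ∧ p' = p + q := ⟨p' - p, by omega, by omega⟩
    have hqk : 0 < q * k := Nat.mul_pos hq hk
    have hne : ¬ (u = u' ∧ v = v') := by
      rintro ⟨rfl, -⟩
      rw [add_mul] at hu'; omega
    rw [if_neg hne]
    obtain ⟨a, x, hal, hxl, hXe⟩ := hcd v
    obtain ⟨b, y, hbl, hyl, hYe⟩ := hcd v'
    exact wander_lt_aux ρ hC hk hl hζ (q := q) hq rfl u u' hu hu' _ _ a b x y
      (hal.trans hbl.symm) hXe hYe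
      (by rw [hyl, hxl, hv, hv', add_mul])
  · subst heq
    rw [adj_inner]
    have h1 : star (wordOp ρ.S u) (wordOp ρ.S u' (wordOp ρ.T v' (ρ.S i ζ)))
        = (star (wordOp ρ.S u) * wordOp ρ.S u') (wordOp ρ.T v' (ρ.S i ζ)) := rfl
    rw [h1]
    by_cases huu : u = u'
    · subst huu
      rw [strip_eq_one ρ.S ρ.isometS, ContinuousLinearMap.one_apply, adj_inner]
      have h2 : star (wordOp ρ.T v) (wordOp ρ.T v' (ρ.S i ζ))
          = (star (wordOp ρ.T v) * wordOp ρ.T v') (ρ.S i ζ) := rfl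
      rw [h2]
      by_cases hvv : v = v'
      · subst hvv
        rw [strip_eq_one ρ.T ρ.isometT, ContinuousLinearMap.one_apply, hself, if_pos ⟨rfl, rfl⟩]
      · rw [strip_eq_zero ρ.T ρ.isometT (by omega) hvv]
        simp [hvv]
    · rw [strip_eq_zero ρ.S ρ.isometS (by omega) huu]
      simp [huu]
  · obtain ⟨q, hq, rfl⟩ : ∃ q, 0 < q ∧ p = p' + q := ⟨p - p', by omega, by omega⟩
    have hqk : 0 < q * k := Nat.mul_pos hq hk
    have hne : ¬ (u = u' ∧ v = v') := by
      rintro ⟨rfl, -⟩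
      rw [add_mul] at hu; omega
    rw [if_neg hne, ← inner_conj_symm]
    obtain ⟨a, x, hal, hxl, hXe⟩ := hcd v'
    obtain ⟨b, y, hbl, hyl, hYe⟩ := hcd v
    rw [wander_lt_aux ρ hC hk hl hζ (q := q) hq rfl u' u hu' hu _ _ a b x y
      (hal.trans hbl.symm) hXe hYe
      (by rw [hyl, hxl, hv', hv, add_mul])]
    simp

lemma wander_T (hC : (∑ i, ρ.S i * star (ρ.S i)) = 1) {k l : ℕ} (hk : 0 < k) (hl : 0 < l)
    {ζ : H} (hζ : ρ.IsWanderingKL k l ζ) (j : Fin n) : ρ.IsWanderingKL k l (ρ.T j ζ) := by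
  classical
  have hself : ⟪ρ.T j ζ, ρ.T j ζ⟫ = 1 := by
    rw [adj_inner]
    have h1 : star (ρ.T j) (ρ.T j ζ) = (star (ρ.T j) * ρ.T j) ζ := rfl
    rw [h1, ρ.isometT j j, if_pos rfl, ContinuousLinearMap.one_apply,
      inner_self_eq_norm_sq_to_K, hζ.1]
    norm_num
  have hnorm : ‖ρ.T j ζ‖ = 1 := by
    have h2 := hself
    rw [inner_self_eq_norm_sq_to_K] at h2
    have h3 : ‖ρ.T j ζ‖ ^ 2 = 1 := by
      simpa [← Complex.ofReal_pow, Complex.ofReal_re] using congrArg Complex.re h2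
    nlinarith [norm_nonneg (ρ.T j ζ)]
  have hcd : ∀ (v : List (Fin n)),
      wordOp ρ.T v (ρ.T j ζ) = wordOp ρ.T (v ++ [j]) ζ := by
    intro v
    rw [wordOp_append, wordOp_singleton]; rfl
  refine ⟨hnorm, ?_⟩
  intro p p' u u' v v' hu hv hu' hv'
  simp only [ContinuousLinearMap.mul_apply]
  rcases Nat.lt_trichotomy p p' with hlt | heq | hgt
  · obtain ⟨q, hq, rfl⟩ : ∃ q, 0 < q ∧ p' = p + q := ⟨p' - p, by omega, by omega⟩
    have hqk : 0 < q * k := Nat.mul_pos hq hk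
    have hne : ¬ (u = u' ∧ v = v') := by
      rintro ⟨rfl, -⟩
      rw [add_mul] at hu'; omega
    rw [if_neg hne]
    exact wander_lt_aux ρ hC hk hl hζ (q := q) hq rfl u u' hu hu' _ _ [] []
      (v ++ [j]) (v' ++ [j]) rfl (by rw [hcd]; rfl) (by rw [hcd]; rfl)
      (by simp only [List.length_append, List.length_cons, List.length_nil, hv, hv',
        add_mul]; omega)
  · subst heq
    rw [adj_inner]
    have h1 : star (wordOp ρ.S u) (wordOp ρ.S u' (wordOp ρ.T v' (ρ.T j ζ)))
        = (star (wordOp ρ.S u) * wordOp ρ.S u') (wordOp ρ.T v' (ρ.T j ζ)) := rfl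
    rw [h1]
    by_cases huu : u = u'
    · subst huu
      rw [strip_eq_one ρ.S ρ.isometS, ContinuousLinearMap.one_apply, hcd, hcd, adj_inner]
      have h2 : star (wordOp ρ.T (v ++ [j])) (wordOp ρ.T (v' ++ [j]) ζ)
          = (star (wordOp ρ.T (v ++ [j])) * wordOp ρ.T (v' ++ [j])) ζ := rfl
      rw [h2]
      by_cases hvv : v = v'
      · subst hvv
        rw [strip_eq_one ρ.T ρ.isometT, ContinuousLinearMap.one_apply,
          inner_self_eq_norm_sq_to_K, hζ.1, if_pos ⟨rfl, rfl⟩]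
        norm_num
      · rw [strip_eq_zero ρ.T ρ.isometT (by simp [hv, hv']) (by simp [hvv])]
        simp [hvv]
    · rw [strip_eq_zero ρ.S ρ.isometS (by omega) huu]
      simp [huu]
  · obtain ⟨q, hq, rfl⟩ : ∃ q, 0 < q ∧ p = p' + q := ⟨p - p', by omega, by omega⟩
    have hqk : 0 < q * k := Nat.mul_pos hq hk
    have hne : ¬ (u = u' ∧ v = v') := by
      rintro ⟨rfl, -⟩
      rw [add_mul] at hu; omega
    rw [if_neg hne, ← inner_conj_symm]
    rw [wander_lt_aux ρ hC hk hl hζ (q := q) hq rfl u' u hu' hu _ _ [] []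
      (v' ++ [j]) (v ++ [j]) rfl (by rw [hcd]; rfl) (by rw [hcd]; rfl)
      (by simp only [List.length_append, List.length_cons, List.length_nil, hv, hv',
        add_mul]; omega)]
    simp

end StructAux

namespace StructAux

open scoped InnerProductSpace ComplexInnerProductSpace Classical

variable {m n : ℕ} {θ : Equiv.Perm (Fin m × Fin n)} {H : Type*}
  [NormedAddCommGroup H] [InnerProductSpace ℂ H] [CompleteSpace H] (ρ : TwoGraphRep m n θ H)

lemma mapsK_S (hC : (∑ i, ρ.S i * star (ρ.S i)) = 1) {k l : ℕ} (hk : 0 < k) (hl : 0 < l)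
    (i : Fin m) {x : H}
    (hx : x ∈ (Submodule.span ℂ {ζ : H | ρ.IsWanderingKL k l ζ}).topologicalClosure) :
    ρ.S i x ∈ (Submodule.span ℂ {ζ : H | ρ.IsWanderingKL k l ζ}).topologicalClosure := by
  set K := (Submodule.span ℂ {ζ : H | ρ.IsWanderingKL k l ζ}).topologicalClosure with hK
  have h1 : Submodule.span ℂ {ζ : H | ρ.IsWanderingKL k l ζ} ≤ K.comap (ρ.S i : H →ₗ[ℂ] H) := by
    rw [Submodule.span_le]
    intro ζ hζ
    exact Submodule.le_topologicalClosure _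
      (Submodule.subset_span (wander_S ρ hC hk hl hζ i))
  have h2 : IsClosed ((K.comap (ρ.S i : H →ₗ[ℂ] H) : Submodule ℂ H) : Set H) := by
    have : ((K.comap (ρ.S i : H →ₗ[ℂ] H) : Submodule ℂ H) : Set H) = (ρ.S i) ⁻¹' (K : Set H) := rfl
    rw [this]
    exact (Submodule.isClosed_topologicalClosure _).preimage (ρ.S i).continuous
  exact Submodule.topologicalClosure_minimal _ h1 h2 hx

lemma mapsK_T (hC : (∑ i, ρ.S i * star (ρ.S i)) = 1) {k l : ℕ} (hk : 0 < k) (hl : 0 < l)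
    (j : Fin n) {x : H}
    (hx : x ∈ (Submodule.span ℂ {ζ : H | ρ.IsWanderingKL k l ζ}).topologicalClosure) :
    ρ.T j x ∈ (Submodule.span ℂ {ζ : H | ρ.IsWanderingKL k l ζ}).topologicalClosure := by
  set K := (Submodule.span ℂ {ζ : H | ρ.IsWanderingKL k l ζ}).topologicalClosure with hK
  have h1 : Submodule.span ℂ {ζ : H | ρ.IsWanderingKL k l ζ} ≤ K.comap (ρ.T j : H →ₗ[ℂ] H) := by
    rw [Submodule.span_le]
    intro ζ hζ
    exact Submodule.le_topologicalClosure _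
      (Submodule.subset_span (wander_T ρ hC hk hl hζ j))
  have h2 : IsClosed ((K.comap (ρ.T j : H →ₗ[ℂ] H) : Submodule ℂ H) : Set H) := by
    have : ((K.comap (ρ.T j : H →ₗ[ℂ] H) : Submodule ℂ H) : Set H) = (ρ.T j) ⁻¹' (K : Set H) := rfl
    rw [this]
    exact (Submodule.isClosed_topologicalClosure _).preimage (ρ.T j).continuous
  exact Submodule.topologicalClosure_minimal _ h1 h2 hx

end StructAux

/-- The range of each structure projection `P_{k,l}` (k,l>0) is invariant under all `S_i*` and
`T_j*`; consequently the range of the first structure projection is invariant under `A*` for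
every `A ∈ 𝔖`. -/
theorem statement6 {m n : ℕ} (hm : 0 < m) (hn : 0 < n) (hmn : 2 ≤ m ∨ 2 ≤ n)
    {θ : Equiv.Perm (Fin m × Fin n)} {H : Type*}
    [NormedAddCommGroup H] [InnerProductSpace ℂ H] [CompleteSpace H]
    (ρ : TwoGraphRep m n θ H) (hCuntz : ρ.CuntzType) :
    (∀ k l : ℕ, 0 < k → 0 < l →
      (∀ i, ∀ x ∈ ρ.structSpaceKL k l, star (ρ.S i) x ∈ ρ.structSpaceKL k l) ∧
      (∀ j, ∀ x ∈ ρ.structSpaceKL k l, star (ρ.T j) x ∈ ρ.structSpaceKL k l)) ∧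
    (∀ A ∈ ρ.alg, ∀ x ∈ ρ.firstStructSpace, star A x ∈ ρ.firstStructSpace) := by
  classical
  obtain ⟨hCS, hCT⟩ := hCuntz
  have main : ∀ k l : ℕ, 0 < k → 0 < l →
      (∀ i, ∀ x ∈ ρ.structSpaceKL k l, star (ρ.S i) x ∈ ρ.structSpaceKL k l) ∧
      (∀ j, ∀ x ∈ ρ.structSpaceKL k l, star (ρ.T j) x ∈ ρ.structSpaceKL k l) := by
    intro k l hk hl
    constructor
    · intro i x hx
      rw [TwoGraphRep.structSpaceKL, Submodule.mem_orthogonal] at hx ⊢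
      intro w hw
      rw [show (inner ℂ w (star (ρ.S i) x) : ℂ) = inner ℂ (ρ.S i w) x from
        (StructAux.adj_inner (ρ.S i) w x).symm]
      exact hx _ (StructAux.mapsK_S ρ hCS hk hl i hw)
    · intro j x hx
      rw [TwoGraphRep.structSpaceKL, Submodule.mem_orthogonal] at hx ⊢
      intro w hw
      rw [show (inner ℂ w (star (ρ.T j) x) : ℂ) = inner ℂ (ρ.T j w) x from
        (StructAux.adj_inner (ρ.T j) w x).symm]
      exact hx _ (StructAux.mapsK_T ρ hCS hk hl j hw)
  refine ⟨main, ?_⟩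
  intro A hA x hx
  -- membership in the first structure space, unpacked
  have hmemP : ∀ y : H, y ∈ ρ.firstStructSpace ↔
      ∀ k l : ℕ, 0 < k → 0 < l → y ∈ ρ.structSpaceKL k l := by
    intro y
    simp [TwoGraphRep.firstStructSpace, Submodule.mem_iInf]
  -- the adjoint of every element of the generated *-free algebra preserves P
  have hadjoin : ∀ B ∈ Algebra.adjoin ℂ (Set.range ρ.S ∪ Set.range ρ.T),
      ∀ y, y ∈ ρ.firstStructSpace → star B y ∈ ρ.firstStructSpace := by
    intro B hB
    induction hB using Algebra.adjoin_induction with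
    | mem B hBmem =>
        intro y hy
        rw [hmemP] at hy ⊢
        intro k l hk hl
        rcases hBmem with ⟨i, rfl⟩ | ⟨j, rfl⟩
        · exact (main k l hk hl).1 i y (hy k l hk hl)
        · exact (main k l hk hl).2 j y (hy k l hk hl)
    | algebraMap c =>
        intro y hy
        have h1 : star ((algebraMap ℂ (H →L[ℂ] H)) c) y
            = (starRingEnd ℂ) c • y := by
          rw [Algebra.algebraMap_eq_smul_one, star_smul, star_one]
          simp
        rw [h1]
        exact Submodule.smul_mem _ _ hy
    | add B C hB hC ihB ihC =>
        intro y hy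
        have h1 : star (B + C) y = star B y + star C y := by
          rw [star_add]; simp
        rw [h1]
        exact Submodule.add_mem _ (ihB y hy) (ihC y hy)
    | mul B C hB hC ihB ihC =>
        intro y hy
        have h1 : star (B * C) y = star C (star B y) := by
          rw [star_mul]; simp
        rw [h1]
        exact ihC _ (ihB y hy)
  -- WOT limit step
  rw [hmemP]
  intro k l hk hl
  rw [TwoGraphRep.structSpaceKL, Submodule.mem_orthogonal]
  intro w hw
  rw [show (inner ℂ w (star A x) : ℂ) = inner ℂ (A w) x from
    (StructAux.adj_inner A w x).symm]
  rw [show (inner ℂ (A w) x : ℂ) = (starRingEnd ℂ) (inner ℂ x (A w)) from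
    (inner_conj_symm (A w) x).symm]
  have hz : (inner ℂ x (A w) : ℂ) = 0 := by
    by_contra hne
    have hpos : 0 < ‖(inner ℂ x (A w) : ℂ)‖ := by
      simpa [norm_pos_iff] using hne
    obtain ⟨B, hB, hF⟩ := hA ‖(inner ℂ x (A w) : ℂ)‖ hpos {(x, w)}
    have hBP : star B x ∈ ρ.structSpaceKL k l := by
      have := hadjoin B hB x hx
      rw [hmemP] at this
      exact this k l hk hl
    have hBw0 : (inner ℂ x (B w) : ℂ) = 0 := by
      rw [show (inner ℂ x (B w) : ℂ) = (starRingEnd ℂ) (inner ℂ (B w) x) from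
        (inner_conj_symm x (B w)).symm]
      rw [show (inner ℂ (B w) x : ℂ) = inner ℂ w (star B x) from
        StructAux.adj_inner B w x]
      rw [TwoGraphRep.structSpaceKL, Submodule.mem_orthogonal] at hBP
      rw [hBP w hw]
      simp
    have hsplit : (inner ℂ x (A w) : ℂ) = inner ℂ x ((A - B) w) + inner ℂ x (B w) := by
      rw [← inner_add_right]
      congr 1
      simp [ContinuousLinearMap.sub_apply]
    have heq : (inner ℂ x (A w) : ℂ) = inner ℂ x ((A - B) w) := by
      rw [hsplit, hBw0, add_zero]
    have hest : ‖(inner ℂ x ((A - B) w) : ℂ)‖ < ‖(inner ℂ x (A w) : ℂ)‖ :=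
      hF (x, w) (Finset.mem_singleton_self _)
    rw [← heq] at hest
    exact lt_irrefl _ hest
  rw [hz]
  simp
end
end

section
/- Let n ≥ 2, let S_1,…,S_n be isometries on a complex Hilbert space H with pairwise orthogonal ranges (S_i*S_j = δ_{i,j}I), let α be a permutation of {1,…,n}, and set T_j := S_{α(j)} for 1 ≤ j ≤ n. Define θ(i,j) := (α(j), α^{-1}(i)); then θ is a permutation of {1,…,n}×{1,…,n} and: (i) S_iT_j = T_{j'}S_{i'} whenever θ(i,j) = (i',j'), so (S,T) is an isometric representation of F_θ^+; (ii) the unital WOT-closed algebra generated by {S_1,…,S_n,T_1,…,T_n} equals the free semigroup algebra generated by S_1,…,S_n, i.e. the unital WOT-closed algebra generated by {S_1,…,S_n}; (iii) the 2-graph F_θ^+ is periodic with period (1,−1): the bijection γ := α^{-1} of {1,…,n} satisfies θ(i,j) = (γ^{-1}(j), γ(i)) for all i, j. -/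
noncomputable section

open scoped InnerProductSpace ComplexInnerProductSpace Classical

/-- Every free semigroup algebra is a nonself-adjoint periodic 2-graph algebra. -/
theorem statement11 (n : ℕ) (hn : 2 ≤ n) {H : Type*}
    [NormedAddCommGroup H] [InnerProductSpace ℂ H] [CompleteSpace H]
    (S : Fin n → H →L[ℂ] H)
    (hiso : ∀ i j, star (S i) * S j = if i = j then 1 else 0)
    (α : Equiv.Perm (Fin n)) (T : Fin n → H →L[ℂ] H) (hT : ∀ j, T j = S (α j)) :
    ∃ θ : Equiv.Perm (Fin n × Fin n),
      (∀ i j, θ (i, j) = (α j, α.symm i)) ∧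
      (∀ i j, S i * T j = T (θ (i, j)).2 * S (θ (i, j)).1) ∧
      genWotAlg (Set.range S ∪ Set.range T) = genWotAlg (Set.range S) ∧
      ∃ γ : Equiv.Perm (Fin n), ∀ i j, θ (i, j) = (γ.symm j, γ i) := by
  refine ⟨(Equiv.prodComm _ _).trans (α.prodCongr α.symm), fun i j => rfl, ?_, ?_, α.symm, fun i j => rfl⟩
  · intro i j
    simp [hT]
  · have : Set.range T = Set.range S := by
      apply Set.eq_of_subset_of_subset
      · rintro _ ⟨j, rfl⟩; exact ⟨α j, (hT j).symm⟩
      · rintro _ ⟨i, rfl⟩; exact ⟨α.symm i, by rw [hT, Equiv.apply_symm_apply]⟩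
    rw [this, Set.union_self]
end
end

section
/- Let (S,T) be an isometric representation of F_θ^+ on H (m ≥ 2 or n ≥ 2) and let 𝔖 be the unital WOT-closed algebra generated by {S_1,…,S_m,T_1,…,T_n}. If the unital WOT-closed algebra generated by {S_1,…,S_m} is self-adjoint and the unital WOT-closed algebra generated by {T_1,…,T_n} is self-adjoint (i.e. both row-isometries S and T are singular), then 𝔖 is self-adjoint. -/
noncomputable section

open scoped InnerProductSpace ComplexInnerProductSpace Classical

section Aux
variable {E : Type*} [NormedAddCommGroup E] [InnerProductSpace ℂ E]

lemma mem_wotClosure_self' {S : Set (E →L[ℂ] E)} {A} (h : A ∈ S) : A ∈ wotClosure S :=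
  fun ε hε F => ⟨A, h, fun p _ => by simp [hε]⟩

lemma wotClosure_mono' {S T : Set (E →L[ℂ] E)} (h : S ⊆ T) : wotClosure S ⊆ wotClosure T := by
  intro A hA ε hε F
  obtain ⟨B, hB, h2⟩ := hA ε hε F
  exact ⟨B, h hB, h2⟩

lemma tri_aux {A B C : E →L[ℂ] E} {p : E × E} :
    ‖⟪p.1, (A - C) p.2⟫‖ ≤ ‖⟪p.1, (A - B) p.2⟫‖ + ‖⟪p.1, (B - C) p.2⟫‖ := by
  have h : (A - C) p.2 = (A - B) p.2 + (B - C) p.2 := by simp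
  rw [h, inner_add_right]
  exact norm_add_le _ _

lemma wot_approx {S : Set (E →L[ℂ] E)} {A : E →L[ℂ] E} (hA : A ∈ wotClosure S) {ε : ℝ}
    (hε : 0 < ε) (F : Finset (E × E)) (g : E × E → E × E) :
    ∃ B ∈ S, ∀ p ∈ F, ‖⟪(g p).1, (A - B) (g p).2⟫‖ < ε := by
  classical
  obtain ⟨B, hB, h⟩ := hA ε hε (F.image g)
  exact ⟨B, hB, fun p hp => h (g p) (Finset.mem_image_of_mem g hp)⟩

lemma wotClosure_add' {S : Subalgebra ℂ (E →L[ℂ] E)} {A B : E →L[ℂ] E}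
    (hA : A ∈ wotClosure (S : Set (E →L[ℂ] E))) (hB : B ∈ wotClosure (S : Set (E →L[ℂ] E))) :
    A + B ∈ wotClosure (S : Set (E →L[ℂ] E)) := by
  intro ε hε F
  obtain ⟨A', hA', h1⟩ := hA (ε/2) (by linarith) F
  obtain ⟨B', hB', h2⟩ := hB (ε/2) (by linarith) F
  refine ⟨A' + B', add_mem hA' hB', fun p hp => ?_⟩
  have h : (A + B - (A' + B')) p.2 = (A - A') p.2 + (B - B') p.2 := by
    simp only [ContinuousLinearMap.sub_apply, ContinuousLinearMap.add_apply]; abel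
  rw [h, inner_add_right]
  calc ‖⟪p.1, (A - A') p.2⟫ + ⟪p.1, (B - B') p.2⟫‖
      ≤ ‖⟪p.1, (A - A') p.2⟫‖ + ‖⟪p.1, (B - B') p.2⟫‖ := norm_add_le _ _
    _ < ε := by linarith [h1 p hp, h2 p hp]

variable [CompleteSpace E]

lemma wotClosure_mul_right' {S : Subalgebra ℂ (E →L[ℂ] E)} {A B : E →L[ℂ] E}
    (hA : A ∈ wotClosure (S : Set (E →L[ℂ] E))) (hB : B ∈ S) :
    A * B ∈ wotClosure (S : Set (E →L[ℂ] E)) := by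
  intro ε hε F
  obtain ⟨A', hA', h1⟩ := wot_approx hA hε F (fun p => (p.1, B p.2))
  refine ⟨A' * B, mul_mem hA' hB, fun p hp => ?_⟩
  have h : (A * B - A' * B) p.2 = (A - A') (B p.2) := by
    simp only [ContinuousLinearMap.sub_apply, ContinuousLinearMap.mul_apply]
  rw [h]
  exact h1 p hp

lemma wotClosure_mul' {S : Subalgebra ℂ (E →L[ℂ] E)} {A B : E →L[ℂ] E}
    (hA : A ∈ wotClosure (S : Set (E →L[ℂ] E))) (hB : B ∈ wotClosure (S : Set (E →L[ℂ] E))) :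
    A * B ∈ wotClosure (S : Set (E →L[ℂ] E)) := by
  intro ε hε F
  obtain ⟨B', hB', h1⟩ := wot_approx hB (by linarith : (0:ℝ) < ε/2) F
    (fun p => (ContinuousLinearMap.adjoint A p.1, p.2))
  obtain ⟨C, hC, h2⟩ := wotClosure_mul_right' hA hB' (ε/2) (by linarith) F
  refine ⟨C, hC, fun p hp => ?_⟩
  have key : ‖⟪p.1, (A * B - A * B') p.2⟫‖ < ε/2 := by
    have h0 : ⟪(ContinuousLinearMap.adjoint A) p.1, (B - B') p.2⟫_ℂ
        = ⟪p.1, A ((B - B') p.2)⟫_ℂ :=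
      ContinuousLinearMap.adjoint_inner_left A ((B - B') p.2) p.1
    have h2' : A ((B - B') p.2) = (A * B - A * B') p.2 := by
      simp only [ContinuousLinearMap.sub_apply, ContinuousLinearMap.mul_apply, map_sub]
    rw [← h2', ← h0]
    exact h1 p hp
  calc ‖⟪p.1, (A * B - C) p.2⟫‖
      ≤ ‖⟪p.1, (A * B - A * B') p.2⟫‖ + ‖⟪p.1, (A * B' - C) p.2⟫‖ := tri_aux
    _ < ε := by linarith [h2 p hp]

lemma star_mem_wotClosure' {S T : Set (E →L[ℂ] E)} {A : E →L[ℂ] E}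
    (hA : A ∈ wotClosure S) (hST : ∀ B ∈ S, star B ∈ wotClosure T) :
    star A ∈ wotClosure T := by
  intro ε hε F
  obtain ⟨B, hB, h1⟩ := wot_approx hA (by linarith : (0:ℝ) < ε/2) F Prod.swap
  obtain ⟨C, hC, h2⟩ := hST B hB (ε/2) (by linarith) F
  refine ⟨C, hC, fun p hp => ?_⟩
  have key : ‖⟪p.1, (star A - star B) p.2⟫‖ < ε/2 := by
    have h : ⟪p.1, (star A - star B) p.2⟫_ℂ = ⟪(A - B) p.1, p.2⟫_ℂ := by
      simp only [ContinuousLinearMap.sub_apply, inner_sub_right, inner_sub_left,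
        ContinuousLinearMap.star_eq_adjoint, ContinuousLinearMap.adjoint_inner_right]
    rw [h, ← inner_conj_symm, RCLike.norm_conj]
    exact h1 p hp
  calc ‖⟪p.1, (star A - C) p.2⟫‖
      ≤ ‖⟪p.1, (star A - star B) p.2⟫‖ + ‖⟪p.1, (star B - C) p.2⟫‖ := tri_aux
    _ < ε := by linarith [h2 p hp]

end Aux

set_option maxHeartbeats 1000000 in
/-- If both row-isometries `S` and `T` are singular, then `𝔖` is self-adjoint. -/
theorem statement12 {m n : ℕ} (hm : 0 < m) (hn : 0 < n) (hmn : 2 ≤ m ∨ 2 ≤ n)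
    {θ : Equiv.Perm (Fin m × Fin n)} {H : Type*}
    [NormedAddCommGroup H] [InnerProductSpace ℂ H] [CompleteSpace H]
    (ρ : TwoGraphRep m n θ H)
    (hS : ∀ A ∈ genWotAlg (Set.range ρ.S), star A ∈ genWotAlg (Set.range ρ.S))
    (hT : ∀ A ∈ genWotAlg (Set.range ρ.T), star A ∈ genWotAlg (Set.range ρ.T)) :
    ∀ A ∈ ρ.alg, star A ∈ ρ.alg := by
  have hSsub : genWotAlg (Set.range ρ.S) ⊆ ρ.alg :=
    wotClosure_mono' (SetLike.coe_subset_coe.mpr (Algebra.adjoin_mono Set.subset_union_left))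
  have hTsub : genWotAlg (Set.range ρ.T) ⊆ ρ.alg :=
    wotClosure_mono' (SetLike.coe_subset_coe.mpr (Algebra.adjoin_mono Set.subset_union_right))
  have hstarGen : ∀ B ∈ (Set.range ρ.S ∪ Set.range ρ.T), star B ∈ ρ.alg := by
    rintro B (hB | hB)
    · exact hSsub (hS B (mem_wotClosure_self' (Algebra.subset_adjoin hB)))
    · exact hTsub (hT B (mem_wotClosure_self' (Algebra.subset_adjoin hB)))
  have hstarAdj : ∀ B ∈ Algebra.adjoin ℂ (Set.range ρ.S ∪ Set.range ρ.T),
      star B ∈ ρ.alg := by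
    intro B hB
    induction hB using Algebra.adjoin_induction with
    | mem x hx => exact hstarGen x hx
    | algebraMap r =>
        rw [← algebraMap_star_comm]
        exact mem_wotClosure_self' (Subalgebra.algebraMap_mem _ _)
    | add x y hx hy ihx ihy =>
        rw [star_add]
        exact wotClosure_add' ihx ihy
    | mul x y hx hy ihx ihy =>
        rw [star_mul]
        exact wotClosure_mul' ihy ihx
  intro A hA
  exact star_mem_wotClosure' hA hstarAdj
end
end

section
/- Let 𝔄 be a unital WOT-closed subalgebra of B(H), let V_1,…,V_k ∈ 𝔄 be isometries with pairwise orthogonal ranges (V_i*V_j = δ_{i,j}I), and let 𝔍 be the WOT-closed right ideal of 𝔄 generated by V_1,…,V_k, i.e. the WOT-closure of V_1𝔄 + ⋯ + V_k𝔄. Then every A ∈ 𝔍 can be written uniquely in the form A = Σ_{i=1}^k V_iA_i with A_1,…,A_k ∈ 𝔄. -/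
noncomputable section

open scoped InnerProductSpace ComplexInnerProductSpace Classical

section Aux13

variable {H : Type*} [NormedAddCommGroup H] [InnerProductSpace ℂ H] [CompleteSpace H]

lemma extract13 {k : ℕ} (V : Fin k → H →L[ℂ] H)
    (hiso : ∀ i j, star (V i) * V j = if i = j then 1 else 0)
    (C : Fin k → H →L[ℂ] H) (i : Fin k) :
    star (V i) * ∑ j, V j * C j = C i := by
  rw [Finset.mul_sum]
  have h : ∀ j ∈ Finset.univ, star (V i) * (V j * C j) = if j = i then C i else 0 := by
    intro j _
    rw [← mul_assoc, hiso]
    by_cases h : i = j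
    · subst h; simp
    · rw [if_neg h, if_neg (Ne.symm h)]; simp
  rw [Finset.sum_congr rfl h, Finset.sum_ite_eq']
  simp

end Aux13

/-- Unique decomposition in a WOT-closed right ideal generated by isometries with pairwise
orthogonal ranges. -/
theorem statement13 {H : Type*} [NormedAddCommGroup H] [InnerProductSpace ℂ H]
    [CompleteSpace H] (𝔄 : Subalgebra ℂ (H →L[ℂ] H))
    (hclosed : wotClosure (𝔄 : Set (H →L[ℂ] H)) = (𝔄 : Set (H →L[ℂ] H)))
    (k : ℕ) (V : Fin k → H →L[ℂ] H) (hV : ∀ i, V i ∈ 𝔄)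
    (hiso : ∀ i j, star (V i) * V j = if i = j then 1 else 0) :
    ∀ A ∈ wotClosure {X : H →L[ℂ] H |
        ∃ C : Fin k → H →L[ℂ] H, (∀ i, C i ∈ 𝔄) ∧ X = ∑ i, V i * C i},
      ∃! B : Fin k → H →L[ℂ] H, (∀ i, B i ∈ 𝔄) ∧ A = ∑ i, V i * B i := by
  intro A hA
  set B0 : Fin k → H →L[ℂ] H := fun i => star (V i) * A with hB0
  have hmem : ∀ i, B0 i ∈ 𝔄 := by
    intro i
    rw [← SetLike.mem_coe, ← hclosed]
    intro ε hε F
    obtain ⟨X, hXS, hX⟩ := hA ε hε (F.image fun p => (V i p.1, p.2))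
    obtain ⟨C, hC, rfl⟩ := hXS
    refine ⟨C i, hC i, ?_⟩
    intro p hp
    have h1 := hX (V i p.1, p.2) (Finset.mem_image_of_mem _ hp)
    have h2 : (B0 i - C i) p.2 = star (V i) ((A - ∑ j, V j * C j) p.2) := by
      rw [hB0]
      simp only [← extract13 V hiso C i]
      rw [← mul_sub]
      rfl
    calc ‖⟪p.1, (B0 i - C i) p.2⟫‖
        = ‖⟪V i p.1, (A - ∑ j, V j * C j) p.2⟫‖ := by
          rw [h2, ContinuousLinearMap.star_eq_adjoint,
            ContinuousLinearMap.adjoint_inner_right]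
      _ < ε := h1
  have key : A = ∑ i, V i * B0 i := by
    have hzero : ∀ (y x : H), ⟪x, (A - ∑ i, V i * B0 i) y⟫ = 0 := by
      intro y x
      by_contra hne
      set c : ℂ := ⟪x, (A - ∑ i, V i * B0 i) y⟫ with hc
      have hpos : 0 < ‖c‖ := norm_pos_iff.mpr hne
      have hk1 : (0 : ℝ) < (k : ℝ) + 1 := by positivity
      have hε' : 0 < ‖c‖ / ((k : ℝ) + 1) := by positivity
      obtain ⟨X, hXS, hX⟩ := hA (‖c‖ / ((k : ℝ) + 1)) hε'
        (insert (x, y) (Finset.image (fun i => (V i (star (V i) x), y)) Finset.univ))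
      obtain ⟨C, hC, rfl⟩ := hXS
      set X : H →L[ℂ] H := ∑ j, V j * C j with hXdef
      have hXrec : X = ∑ i, V i * (star (V i) * X) := by
        conv_lhs => rw [hXdef]
        refine Finset.sum_congr rfl fun i _ => ?_
        rw [extract13 V hiso C i]
      have hopeq : A - ∑ i, V i * B0 i
          = (A - X) - ∑ i, V i * (star (V i) * (A - X)) := by
        have h3 : ∀ i ∈ Finset.univ, V i * (star (V i) * (A - X))
            = V i * (star (V i) * A) - V i * (star (V i) * X) := by
          intro i _; rw [mul_sub, mul_sub]
        rw [Finset.sum_congr rfl h3, Finset.sum_sub_distrib, ← hXrec, hB0]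
        abel
      have hterm : ∀ i : Fin k, ⟪x, (V i * (star (V i) * (A - X))) y⟫
          = ⟪V i (star (V i) x), (A - X) y⟫ := by
        intro i
        have : (V i * (star (V i) * (A - X))) y = V i (star (V i) ((A - X) y)) := rfl
        rw [this, ContinuousLinearMap.star_eq_adjoint,
          ← ContinuousLinearMap.adjoint_inner_left (V i),
          ContinuousLinearMap.adjoint_inner_right]
      have hcval : c = ⟪x, (A - X) y⟫
          - ∑ i, ⟪V i (star (V i) x), (A - X) y⟫ := by
        rw [hc, hopeq]
        have : ((A - X) - ∑ i, V i * (star (V i) * (A - X))) y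
            = (A - X) y - (∑ i, V i * (star (V i) * (A - X))) y := rfl
        rw [this, inner_sub_right]
        congr 1
        rw [ContinuousLinearMap.sum_apply, inner_sum]
        exact Finset.sum_congr rfl fun i _ => hterm i
      have h1 : ‖⟪x, (A - X) y⟫‖ < ‖c‖ / ((k : ℝ) + 1) :=
        hX (x, y) (Finset.mem_insert_self _ _)
      have h2 : ∀ i : Fin k, ‖⟪V i (star (V i) x), (A - X) y⟫‖ < ‖c‖ / ((k : ℝ) + 1) :=
        fun i => hX (V i (star (V i) x), y)
          (Finset.mem_insert_of_mem (Finset.mem_image_of_mem _ (Finset.mem_univ i)))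
      have hlt : ‖c‖ < ‖c‖ := by
        calc ‖c‖ ≤ ‖⟪x, (A - X) y⟫‖ + ∑ i, ‖⟪V i (star (V i) x), (A - X) y⟫‖ := by
              rw [hcval]
              exact (norm_sub_le _ _).trans (by gcongr; exact norm_sum_le _ _)
          _ < ‖c‖ / ((k : ℝ) + 1) + (k : ℝ) * (‖c‖ / ((k : ℝ) + 1)) := by
              have hsum : ∑ i : Fin k, ‖⟪V i (star (V i) x), (A - X) y⟫‖
                  ≤ (k : ℝ) * (‖c‖ / ((k : ℝ) + 1)) := by
                calc ∑ i : Fin k, ‖⟪V i (star (V i) x), (A - X) y⟫‖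
                    ≤ ∑ _i : Fin k, ‖c‖ / ((k : ℝ) + 1) :=
                      Finset.sum_le_sum fun i _ => (h2 i).le
                  _ = (k : ℝ) * (‖c‖ / ((k : ℝ) + 1)) := by
                      simp [Finset.sum_const, mul_comm]
              exact add_lt_add_of_lt_of_le h1 hsum
          _ = ‖c‖ := by field_simp; ring
      exact lt_irrefl _ hlt
    have hAeq : ∀ y, (A - ∑ i, V i * B0 i) y = 0 := by
      intro y
      apply ext_inner_left ℂ
      intro v
      rw [hzero y v, inner_zero_right]
    have : A - ∑ i, V i * B0 i = 0 := ContinuousLinearMap.ext fun y => by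
      rw [hAeq y]; rfl
    exact (sub_eq_zero.mp this)
  refine ⟨B0, ⟨hmem, key⟩, ?_⟩
  rintro C ⟨hC, hCeq⟩
  funext i
  simp only [hB0]
  rw [hCeq, extract13 V hiso]
end
end

section
/- Let S_1,…,S_m and T_1,…,T_n be isometries on a complex Hilbert space H such that S_i*S_{i'} = δ_{i,i'}I, T_j*T_{j'} = δ_{j,j'}I, Σ_{i=1}^m S_iS_i* = I = Σ_{j=1}^n T_jT_j*, and S_iT_j = T_jS_i for all i, j (i.e. (S,T) is a Cuntz-type representation of the 2-graph F_id^+ for the identity permutation). Then S_i*T_j = T_jS_i* for all i, j. -/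
noncomputable section

open scoped InnerProductSpace ComplexInnerProductSpace Classical

/-- For a Cuntz-type representation of `F_id⁺`, `S_i* T_j = T_j S_i*` for all `i, j`. -/
theorem statement15 {m n : ℕ} (hm : 0 < m) (hn : 0 < n) {H : Type*}
    [NormedAddCommGroup H] [InnerProductSpace ℂ H] [CompleteSpace H]
    (S : Fin m → H →L[ℂ] H) (T : Fin n → H →L[ℂ] H)
    (hS : ∀ i i', star (S i) * S i' = if i = i' then 1 else 0)
    (hT : ∀ j j', star (T j) * T j' = if j = j' then 1 else 0)
    (hScuntz : (∑ i, S i * star (S i)) = 1) (hTcuntz : (∑ j, T j * star (T j)) = 1)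
    (hcomm : ∀ i j, S i * T j = T j * S i) :
    ∀ i j, star (S i) * T j = T j * star (S i) := by
  intro i j
  have h1 : star (S i) * T j = star (S i) * T j * (∑ i', S i' * star (S i')) := by
    rw [hScuntz, mul_one]
  rw [h1, Finset.mul_sum]
  have h2 : ∀ i' : Fin m, star (S i) * T j * (S i' * star (S i'))
      = if i' = i then T j * star (S i') else 0 := by
    intro i'
    have : star (S i) * T j * (S i' * star (S i'))
        = (star (S i) * S i') * (T j * star (S i')) := by
      have hc := hcomm i' j
      calc star (S i) * T j * (S i' * star (S i'))
          = star (S i) * (T j * S i') * star (S i') := by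
            simp only [mul_assoc]
        _ = star (S i) * (S i' * T j) * star (S i') := by rw [← hc]
        _ = (star (S i) * S i') * (T j * star (S i')) := by
            simp only [mul_assoc]
    rw [this, hS]
    by_cases h : i = i'
    · simp [h]
    · rw [if_neg h, if_neg (fun hh => h hh.symm)]
      simp
  simp_rw [h2]
  simp
end
end

section
/- Let n ≥ 2, let H_n = ℓ²(F_n^+) with orthonormal basis {ξ_w : w ∈ F_n^+}, and let L_i, R_i (1 ≤ i ≤ n) be the isometries on H_n determined by L_iξ_w = ξ_{iw} and R_iξ_w = ξ_{wi}. Then the commuting pair (L,R) has no Cuntz-type extension: there do not exist a complex Hilbert space K, a linear isometry ι : H_n → K, and isometries S_1,…,S_n, T_1,…,T_n on K satisfying S_i*S_{i'} = δ_{i,i'}I, T_j*T_{j'} = δ_{j,j'}I, Σ_{i=1}^n S_iS_i* = I = Σ_{j=1}^n T_jT_j*, S_iT_j = T_jS_i for all i, j, and S_i ∘ ι = ι ∘ L_i, T_j ∘ ι = ι ∘ R_j for all i, j. -/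
noncomputable section

open scoped InnerProductSpace ComplexInnerProductSpace Classical

/-- The pair `(L, R)` of left and right regular representations of `F_n⁺` admits no Cuntz-type
extension. -/
theorem statement16 (n : ℕ) (hn : 2 ≤ n) {Hn : Type*}
    [NormedAddCommGroup Hn] [InnerProductSpace ℂ Hn] [CompleteSpace Hn]
    (ξ : HilbertBasis (List (Fin n)) ℂ Hn)
    (L R : Fin n → Hn →L[ℂ] Hn)
    (hL : ∀ i w, L i (ξ w) = ξ (i :: w))
    (hR : ∀ i w, R i (ξ w) = ξ (w ++ [i])) :
    ∀ (K : Type*) [NormedAddCommGroup K] [InnerProductSpace ℂ K] [CompleteSpace K],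
    ∀ (ι : Hn →L[ℂ] K) (S T : Fin n → K →L[ℂ] K),
      (∀ x, ‖ι x‖ = ‖x‖) →
      (∀ i j, star (S i) * S j = if i = j then 1 else 0) →
      (∀ i j, star (T i) * T j = if i = j then 1 else 0) →
      ((∑ i, S i * star (S i)) = 1) → ((∑ j, T j * star (T j)) = 1) →
      (∀ i j, S i * T j = T j * S i) →
      (∀ i x, S i (ι x) = ι (L i x)) →
      (∀ j x, T j (ι x) = ι (R j x)) → False := by
  intro K _ _ _ ι S T hι hSiso hTiso hScuntz hTcuntz hcomm hSι hTι
  classical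
  -- `star (S i)` commutes with `T j`
  have hstar : ∀ i j, star (S i) * T j = T j * star (S i) := by
    intro i j
    have key : star (S i) * T j = ∑ k, (star (S i) * S k) * (T j * star (S k)) := by
      calc star (S i) * T j = star (S i) * T j * (∑ k, S k * star (S k)) := by
            rw [hScuntz, mul_one]
        _ = ∑ k, star (S i) * T j * (S k * star (S k)) := by rw [Finset.mul_sum]
        _ = ∑ k, (star (S i) * S k) * (T j * star (S k)) := by
            refine Finset.sum_congr rfl fun k _ => ?_
            rw [mul_assoc (star (S i)) (T j), ← mul_assoc (T j) (S k), ← hcomm k j]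
            rw [← mul_assoc, ← mul_assoc, mul_assoc (star (S i) * S k)]
    rw [key]
    simp [hSiso, ite_mul, Finset.sum_ite_eq]
  -- hence `S i` commutes with `star (T j)`
  have hTS : ∀ i j, S i * star (T j) = star (T j) * S i := by
    intro i j
    have h := congrArg star (hstar i j)
    simpa [star_mul] using h.symm
  set η := ι (ξ []) with hηdef
  have hnormη : ‖η‖ = 1 := by rw [hι]; exact ξ.orthonormal.1 []
  have hTη : ∀ j, T j η = ι (ξ [j]) := by
    intro j
    rw [hηdef, hTι, hR]
    simp
  -- S i (star (T i) η) = η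
  have hSTη : ∀ i, S i (star (T i) η) = η := by
    intro i
    have h1 : S i (star (T i) η) = star (T i) (S i η) := by
      have h := ContinuousLinearMap.ext_iff.mp (hTS i i) η
      simpa [ContinuousLinearMap.mul_apply] using h
    rw [h1, hηdef, hSι, hL, ← hηdef, ← hTη i]
    have h2 := ContinuousLinearMap.ext_iff.mp (hTiso i i) η
    simpa [ContinuousLinearMap.mul_apply] using h2
  have hηη : ⟪η, η⟫ = (1 : ℂ) := by
    rw [inner_self_eq_norm_sq_to_K, hnormη]
    norm_num
  -- each T_i* η has unit length
  have hc : ∀ i, ⟪star (T i) η, star (T i) η⟫ = (1 : ℂ) := by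
    intro i
    have hadj : ∀ x y : K, ⟪S i x, S i y⟫ = ⟪x, y⟫ := by
      intro x y
      have h2 := ContinuousLinearMap.ext_iff.mp (hSiso i i) y
      simp [ContinuousLinearMap.mul_apply] at h2
      calc ⟪S i x, S i y⟫ = ⟪x, star (S i) (S i y)⟫ := by
            rw [ContinuousLinearMap.star_eq_adjoint,
              ContinuousLinearMap.adjoint_inner_right]
        _ = ⟪x, y⟫ := by rw [h2]
    rw [← hadj, hSTη, hηη]
  -- but the Cuntz relation for T gives ⟪η,η⟫ = n
  have hsum : ⟪η, η⟫ = (n : ℂ) := by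
    have h0 : η = (∑ j, T j * star (T j)) η := by rw [hTcuntz]; simp
    calc ⟪η, η⟫ = ⟪η, (∑ j, T j * star (T j)) η⟫ := by rw [← h0]
      _ = ∑ j, ⟪η, T j (star (T j) η)⟫ := by
          rw [ContinuousLinearMap.sum_apply, inner_sum]
          exact Finset.sum_congr rfl fun j _ => by
            rw [ContinuousLinearMap.mul_apply]
      _ = ∑ j, ⟪star (T j) η, star (T j) η⟫ := by
          refine Finset.sum_congr rfl fun j _ => ?_
          rw [ContinuousLinearMap.star_eq_adjoint,
            ← ContinuousLinearMap.adjoint_inner_left,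
            ← ContinuousLinearMap.star_eq_adjoint]
      _ = ∑ _j : Fin n, (1 : ℂ) := Finset.sum_congr rfl fun j _ => hc j
      _ = (n : ℂ) := by simp
  rw [hηη] at hsum
  have : (n : ℂ) ≠ 1 := by
    have : n ≠ 1 := by omega
    exact_mod_cast fun h => this (by exact_mod_cast h)
  exact this hsum.symm
end
end

section
/- Let (S,T) be an isometric representation of F_θ^+ on H, let k,l > 0, and let ζ be a wandering vector for the row-isometry [S_uT_v : |u|=k, |v|=l]. Then for every i ∈ {1,…,m} and every j ∈ {1,…,n}, the vectors S_iζ and T_jζ are again wandering vectors for the row-isometry [S_uT_v : |u|=k, |v|=l]. -/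
noncomputable section

open scoped InnerProductSpace ComplexInnerProductSpace Classical

section Statement17Aux

variable {E : Type*} [NormedAddCommGroup E] [InnerProductSpace ℂ E] [CompleteSpace E]

lemma wordOp_nil' {ι : Type*} (V : ι → E →L[ℂ] E) : wordOp V ([] : List ι) = 1 := rfl

lemma wordOp_cons' {ι : Type*} (V : ι → E →L[ℂ] E) (a : ι) (t : List ι) :
    wordOp V (a :: t) = V a * wordOp V t := by
  simp [wordOp]

lemma wordOp_append' {ι : Type*} (V : ι → E →L[ℂ] E) (a b : List ι) :
    wordOp V (a ++ b) = wordOp V a * wordOp V b := by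
  simp [wordOp]

lemma wordOp_singleton' {ι : Type*} (V : ι → E →L[ℂ] E) (a : ι) :
    wordOp V [a] = V a := by simp [wordOp]

lemma wordOp_star_mul {ι : Type*} [DecidableEq ι] (V : ι → E →L[ℂ] E)
    (hV : ∀ i i', star (V i) * V i' = if i = i' then 1 else 0) :
    ∀ u u' : List ι, u.length ≤ u'.length →
      star (wordOp V u) * wordOp V u' =
        if u <+: u' then wordOp V (u'.drop u.length) else 0 := by
  intro u
  induction u with
  | nil => intro u' _; simp [wordOp_nil']
  | cons a t ih =>
    intro u' hle
    cases u' with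
    | nil => simp at hle
    | cons a' t' =>
      have hle' : t.length ≤ t'.length := by
        simpa [Nat.succ_le_succ_iff] using hle
      rw [wordOp_cons', wordOp_cons', star_mul, mul_assoc,
        ← mul_assoc (star (V a)), hV]
      by_cases hA : a = a'
      · rw [if_pos hA, one_mul, ih t' hle']
        simp [List.cons_prefix_cons, hA]
      · rw [if_neg hA]
        simp [List.cons_prefix_cons, hA]

lemma wordOp_star_mul_eq {ι : Type*} [DecidableEq ι] (V : ι → E →L[ℂ] E)
    (hV : ∀ i i', star (V i) * V i' = if i = i' then 1 else 0)
    (u u' : List ι) (h : u.length = u'.length) :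
    star (wordOp V u) * wordOp V u' = if u = u' then 1 else 0 := by
  rw [wordOp_star_mul V hV u u' h.le]
  by_cases hu : u = u'
  · subst hu
    simp [List.drop_length, wordOp_nil']
  · have hnp : ¬ u <+: u' := fun hp => hu (hp.eq_of_length h)
    simp [hnp, hu]

end Statement17Aux

namespace TwoGraphRep

variable {m n : ℕ} {θ : Equiv.Perm (Fin m × Fin n)} {H : Type*}
  [NormedAddCommGroup H] [InnerProductSpace ℂ H] [CompleteSpace H]

/-- Commute a single `S`-generator to the left past a `T`-word: `T_v S_i = S_{p.1} T_{p.2}`. -/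
def pullP (θ : Equiv.Perm (Fin m × Fin n)) : Fin m → List (Fin n) → Fin m × List (Fin n)
  | i, [] => (i, [])
  | i, j :: v =>
    let p := pullP θ i v
    let q := θ.symm (p.1, j)
    (q.1, q.2 :: p.2)

/-- Inverse of `pullP`. -/
def pushP (θ : Equiv.Perm (Fin m × Fin n)) : Fin m → List (Fin n) → Fin m × List (Fin n)
  | a, [] => (a, [])
  | a, b :: w =>
    let r := θ (a, b)
    let s := pushP θ r.1 w
    (s.1, r.2 :: s.2)

lemma pullP_len (i : Fin m) (v : List (Fin n)) : (pullP θ i v).2.length = v.length := by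
  induction v with
  | nil => rfl
  | cons j v ih => simp [pullP, ih]

lemma pushP_pullP (i : Fin m) (v : List (Fin n)) :
    pushP θ (pullP θ i v).1 (pullP θ i v).2 = (i, v) := by
  induction v with
  | nil => rfl
  | cons j v ih => simp [pullP, pushP, ih]

lemma pullP_inj {i : Fin m} {v v' : List (Fin n)}
    (h : pullP θ i v = pullP θ i v') : v = v' := by
  have h1 := pushP_pullP (θ := θ) i v
  have h2 := pushP_pullP (θ := θ) i v'
  rw [h, h2] at h1
  exact ((Prod.ext_iff.mp h1).2).symm

variable (ρ : TwoGraphRep m n θ H)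

lemma pullP_spec (i : Fin m) (v : List (Fin n)) :
    wordOp ρ.T v * ρ.S i = ρ.S (pullP θ i v).1 * wordOp ρ.T (pullP θ i v).2 := by
  induction v with
  | nil => simp [pullP, wordOp_nil']
  | cons j v ih =>
    have hc := ρ.comm (θ.symm ((pullP θ i v).1, j)).1 (θ.symm ((pullP θ i v).1, j)).2
    rw [show ((θ.symm ((pullP θ i v).1, j)).1, (θ.symm ((pullP θ i v).1, j)).2)
        = θ.symm ((pullP θ i v).1, j) from rfl, Equiv.apply_symm_apply] at hc
    simp only [pullP, wordOp_cons']
    rw [mul_assoc, ih, ← mul_assoc, ← hc, mul_assoc]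

/-- Commute an `S`-word to the left past a `T`-word. -/
def pullWP (θ : Equiv.Perm (Fin m × Fin n)) :
    List (Fin m) → List (Fin n) → List (Fin m) × List (Fin n)
  | [], w => ([], w)
  | a :: u, w =>
    let p := pullP θ a w
    let q := pullWP θ u p.2
    (p.1 :: q.1, q.2)

lemma pullWP_len1 (u : List (Fin m)) (w : List (Fin n)) :
    (pullWP θ u w).1.length = u.length := by
  induction u generalizing w with
  | nil => rfl
  | cons a u ih => simp [pullWP, ih]

lemma pullWP_len2 (u : List (Fin m)) (w : List (Fin n)) :
    (pullWP θ u w).2.length = w.length := by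
  induction u generalizing w with
  | nil => rfl
  | cons a u ih => simp [pullWP, ih, pullP_len]

lemma pullWP_spec (u : List (Fin m)) (w : List (Fin n)) :
    wordOp ρ.T w * wordOp ρ.S u
      = wordOp ρ.S (pullWP θ u w).1 * wordOp ρ.T (pullWP θ u w).2 := by
  induction u generalizing w with
  | nil => simp [pullWP, wordOp_nil']
  | cons a u ih =>
    simp only [pullWP, wordOp_cons']
    rw [← mul_assoc, pullP_spec, mul_assoc, ih, ← mul_assoc]

/-- Commute a single `S`-generator to the right past a `T`-word: `S_i T_v = T_{t.1} S_{t.2}`. -/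
def pushOneP (θ : Equiv.Perm (Fin m × Fin n)) : Fin m → List (Fin n) → List (Fin n) × Fin m
  | i, [] => ([], i)
  | i, j :: v =>
    let r := θ (i, j)
    let s := pushOneP θ r.1 v
    (r.2 :: s.1, s.2)

lemma pushOneP_len (i : Fin m) (v : List (Fin n)) :
    (pushOneP θ i v).1.length = v.length := by
  induction v generalizing i with
  | nil => rfl
  | cons j v ih => simp [pushOneP, ih]

lemma pushOneP_spec (i : Fin m) (v : List (Fin n)) :
    ρ.S i * wordOp ρ.T v = wordOp ρ.T (pushOneP θ i v).1 * ρ.S (pushOneP θ i v).2 := by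
  induction v generalizing i with
  | nil => simp [pushOneP, wordOp_nil']
  | cons j v ih =>
    simp only [pushOneP, wordOp_cons']
    rw [← mul_assoc, ρ.comm, mul_assoc, ih, ← mul_assoc]

/-- Commute an `S`-word to the right past a `T`-word. -/
def pushWP (θ : Equiv.Perm (Fin m × Fin n)) :
    List (Fin m) → List (Fin n) → List (Fin n) × List (Fin m)
  | [], v => (v, [])
  | a :: u, v =>
    let s := pushWP θ u v
    let t := pushOneP θ a s.1
    (t.1, t.2 :: s.2)

lemma pushWP_len1 (u : List (Fin m)) (v : List (Fin n)) :
    (pushWP θ u v).1.length = v.length := by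
  induction u generalizing v with
  | nil => rfl
  | cons a u ih => simp [pushWP, pushOneP_len, ih]

lemma pushWP_len2 (u : List (Fin m)) (v : List (Fin n)) :
    (pushWP θ u v).2.length = u.length := by
  induction u generalizing v with
  | nil => rfl
  | cons a u ih => simp [pushWP, ih]

lemma pushWP_spec (u : List (Fin m)) (v : List (Fin n)) :
    wordOp ρ.S u * wordOp ρ.T v
      = wordOp ρ.T (pushWP θ u v).1 * wordOp ρ.S (pushWP θ u v).2 := by
  induction u generalizing v with
  | nil => simp [pushWP, wordOp_nil']
  | cons a u ih =>
    simp only [pushWP, wordOp_cons']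
    rw [mul_assoc, ih, ← mul_assoc, pushOneP_spec, mul_assoc]

lemma inner_star_move (A : H →L[ℂ] H) (x y : H) :
    ⟪A x, y⟫ = ⟪x, (star A) y⟫ := by
  rw [ContinuousLinearMap.star_eq_adjoint, ContinuousLinearMap.adjoint_inner_right]

variable {k l : ℕ} {ζ : H}

lemma aux_zero (hk : 0 < k) (hζ : ρ.IsWanderingKL k l ζ)
    (d : ℕ) (hd : 0 < d) (b b' : List (Fin n)) (rest : List (Fin m))
    (hrest : rest.length = d * k) (hb' : b'.length = b.length + d * l) :
    ⟪wordOp ρ.T b ζ, wordOp ρ.S rest (wordOp ρ.T b' ζ)⟫ = 0 := by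
  have hpush : wordOp ρ.S rest (wordOp ρ.T b' ζ)
      = wordOp ρ.T (pushWP θ rest b').1 (wordOp ρ.S (pushWP θ rest b').2 ζ) := by
    rw [← ContinuousLinearMap.mul_apply, pushWP_spec, ContinuousLinearMap.mul_apply]
  set c := (pushWP θ rest b').1 with hc
  set dd := (pushWP θ rest b').2 with hdd
  have hclen : c.length = b'.length := pushWP_len1 rest b'
  have hddlen : dd.length = rest.length := pushWP_len2 rest b'
  rw [hpush, inner_star_move, ← ContinuousLinearMap.mul_apply,
    wordOp_star_mul ρ.T ρ.isometT b c (by omega)]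
  by_cases hp : b <+: c
  · rw [if_pos hp]
    set c' := c.drop b.length with hc'
    have hc'len : c'.length = d * l := by
      rw [hc', List.length_drop]; omega
    have hpull : wordOp ρ.T c' (wordOp ρ.S dd ζ)
        = wordOp ρ.S (pullWP θ dd c').1 (wordOp ρ.T (pullWP θ dd c').2 ζ) := by
      rw [← ContinuousLinearMap.mul_apply, pullWP_spec, ContinuousLinearMap.mul_apply]
    rw [hpull]
    have he : (pullWP θ dd c').1.length = d * k := by rw [pullWP_len1]; omega
    have hf : (pullWP θ dd c').2.length = d * l := by rw [pullWP_len2]; omega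
    have hw := hζ.2 0 d [] (pullWP θ dd c').1 [] (pullWP θ dd c').2
      (by simp) (by simp) (by simpa using he) (by simpa using hf)
    have hne : ([] : List (Fin m)) ≠ (pullWP θ dd c').1 := by
      intro h
      have := he
      rw [← h] at this
      simp at this
      omega
    simpa [wordOp_nil', hne] using hw
  · rw [if_neg hp]
    simp

lemma main_le (hk : 0 < k) (hl : 0 < l) (hζ : ρ.IsWanderingKL k l ζ)
    (r s p p' : ℕ) (hpp : p ≤ p') (a a' : List (Fin m)) (b b' : List (Fin n))
    (ha : a.length = p * k + r) (hb : b.length = p * l + s)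
    (ha' : a'.length = p' * k + r) (hb' : b'.length = p' * l + s) :
    ⟪wordOp ρ.S a (wordOp ρ.T b ζ), wordOp ρ.S a' (wordOp ρ.T b' ζ)⟫
      = if a = a' ∧ b = b' then 1 else 0 := by
  have hone : ⟪ζ, ζ⟫ = (1 : ℂ) := by
    have := hζ.2 0 0 [] [] [] [] (by simp) (by simp) (by simp) (by simp)
    simpa [wordOp_nil'] using this
  rw [inner_star_move, ← ContinuousLinearMap.mul_apply]
  rcases eq_or_lt_of_le hpp with h | h
  · -- equal lengths
    subst h
    rw [wordOp_star_mul_eq ρ.S ρ.isometS a a' (by omega)]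
    by_cases hA : a = a'
    · rw [if_pos hA]
      simp only [ContinuousLinearMap.one_apply]
      rw [inner_star_move, ← ContinuousLinearMap.mul_apply,
        wordOp_star_mul_eq ρ.T ρ.isometT b b' (by omega)]
      by_cases hB : b = b'
      · simp [hA, hB, hone, hζ.1]
      · simp [hA, hB]
    · rw [if_neg hA]
      simp [hA]
  · -- p < p'
    have hmulle : p * k ≤ p' * k := Nat.mul_le_mul_right k hpp
    have hmulle' : p * l ≤ p' * l := Nat.mul_le_mul_right l hpp
    have hAne : a ≠ a' := by
      intro hE
      have : a.length = a'.length := by rw [hE]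
      have hkk : p * k < p' * k := (Nat.mul_lt_mul_right hk).mpr h
      omega
    rw [wordOp_star_mul ρ.S ρ.isometS a a' (by omega)]
    by_cases hp : a <+: a'
    · rw [if_pos hp]
      have hd : 0 < p' - p := by omega
      have hsub : (p' - p) * k = p' * k - p * k := by
        rw [Nat.sub_mul]
      have hsub' : (p' - p) * l = p' * l - p * l := by
        rw [Nat.sub_mul]
      have hrest : (a'.drop a.length).length = (p' - p) * k := by
        rw [List.length_drop]; omega
      have hbl : b'.length = b.length + (p' - p) * l := by omega
      rw [aux_zero ρ hk hζ (p' - p) hd b b' _ hrest hbl]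
      simp [hAne]
    · rw [if_neg hp]
      simp [hAne]

lemma main_eq (hk : 0 < k) (hl : 0 < l) (hζ : ρ.IsWanderingKL k l ζ)
    (r s p p' : ℕ) (a a' : List (Fin m)) (b b' : List (Fin n))
    (ha : a.length = p * k + r) (hb : b.length = p * l + s)
    (ha' : a'.length = p' * k + r) (hb' : b'.length = p' * l + s) :
    ⟪wordOp ρ.S a (wordOp ρ.T b ζ), wordOp ρ.S a' (wordOp ρ.T b' ζ)⟫
      = if a = a' ∧ b = b' then 1 else 0 := by
  rcases le_total p p' with hpp | hpp
  · exact ρ.main_le hk hl hζ r s p p' hpp a a' b b' ha hb ha' hb'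
  · rw [← inner_conj_symm,
      ρ.main_le hk hl hζ r s p' p hpp a' a b' b ha' hb' ha hb]
    by_cases hE : a = a' ∧ b = b'
    · simp [hE.1, hE.2]
    · have hE' : ¬ (a' = a ∧ b' = b) := by
        intro h; exact hE ⟨h.1.symm, h.2.symm⟩
      simp [hE, hE']

end TwoGraphRep

/-- Wandering vectors for `[S_u T_v : |u|=k, |v|=l]` propagate under the generators. -/
theorem statement17 {m n : ℕ} (hm : 0 < m) (hn : 0 < n) (hmn : 2 ≤ m ∨ 2 ≤ n)
    {θ : Equiv.Perm (Fin m × Fin n)} {H : Type*}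
    [NormedAddCommGroup H] [InnerProductSpace ℂ H] [CompleteSpace H]
    (ρ : TwoGraphRep m n θ H) (k l : ℕ) (hk : 0 < k) (hl : 0 < l)
    (ζ : H) (hζ : ρ.IsWanderingKL k l ζ) :
    (∀ i, ρ.IsWanderingKL k l (ρ.S i ζ)) ∧ (∀ j, ρ.IsWanderingKL k l (ρ.T j ζ)) := by
  have hone : ⟪ζ, ζ⟫ = (1 : ℂ) := by
    have := hζ.2 0 0 [] [] [] [] (by simp) (by simp) (by simp) (by simp)
    simpa [wordOp_nil'] using this
  have norm_of_inner : ∀ x : H, ⟪x, x⟫ = (1 : ℂ) → ‖x‖ = 1 := by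
    intro x hx
    have h3 : (‖x‖ : ℝ) ^ 2 = 1 := by
      have h2 := inner_self_eq_norm_sq (𝕜 := ℂ) x
      rw [hx] at h2
      simpa using h2.symm
    nlinarith [norm_nonneg x]
  constructor
  · intro i
    constructor
    · apply norm_of_inner
      have : ⟪ρ.S i ζ, ρ.S i ζ⟫ = ⟪ζ, (star (ρ.S i) * ρ.S i) ζ⟫ := by
        rw [TwoGraphRep.inner_star_move, ContinuousLinearMap.mul_apply]
      rw [this, ρ.isometS i i]
      simpa using hone
    · intro p p' u u' v v' hu hv hu' hv'
      have key : ∀ (w : List (Fin m)) (x : List (Fin n)),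
          (wordOp ρ.S w * wordOp ρ.T x) (ρ.S i ζ)
            = wordOp ρ.S (w ++ [(TwoGraphRep.pullP θ i x).1])
                (wordOp ρ.T (TwoGraphRep.pullP θ i x).2 ζ) := by
        intro w x
        have hop : wordOp ρ.S w * wordOp ρ.T x * ρ.S i
            = wordOp ρ.S (w ++ [(TwoGraphRep.pullP θ i x).1])
              * wordOp ρ.T (TwoGraphRep.pullP θ i x).2 := by
          rw [mul_assoc, ρ.pullP_spec i x, wordOp_append', wordOp_singleton', mul_assoc]
        calc (wordOp ρ.S w * wordOp ρ.T x) (ρ.S i ζ)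
            = (wordOp ρ.S w * wordOp ρ.T x * ρ.S i) ζ := by
              simp [ContinuousLinearMap.mul_apply]
          _ = _ := by rw [hop]; simp [ContinuousLinearMap.mul_apply]
      rw [key u v, key u' v']
      rw [ρ.main_eq hk hl hζ 1 0 p p' _ _ _ _
        (by simp [hu]) (by simp [TwoGraphRep.pullP_len, hv])
        (by simp [hu']) (by simp [TwoGraphRep.pullP_len, hv'])]
      congr 1
      have hlen : (TwoGraphRep.pullP θ i v).2.length = p * l := by
        rw [TwoGraphRep.pullP_len]; exact hv
      have hlen' : (TwoGraphRep.pullP θ i v').2.length = p' * l := by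
        rw [TwoGraphRep.pullP_len]; exact hv'
      simp only [eq_iff_iff]
      constructor
      · rintro ⟨h1, h2⟩
        have hpp : p = p' := by
          have : p * l = p' * l := by rw [← hlen, ← hlen', h2]
          exact Nat.eq_of_mul_eq_mul_right hl this
        have hul : u.length = u'.length := by rw [hu, hu', hpp]
        have := List.append_inj h1 (by omega)
        refine ⟨this.1, ?_⟩
        have hsing : (TwoGraphRep.pullP θ i v).1 = (TwoGraphRep.pullP θ i v').1 := by
          have := this.2
          simpa using this
        exact TwoGraphRep.pullP_inj (Prod.ext hsing h2)
      · rintro ⟨h1, h2⟩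
        subst h1; subst h2; exact ⟨rfl, rfl⟩
  · intro j
    constructor
    · apply norm_of_inner
      have : ⟪ρ.T j ζ, ρ.T j ζ⟫ = ⟪ζ, (star (ρ.T j) * ρ.T j) ζ⟫ := by
        rw [TwoGraphRep.inner_star_move, ContinuousLinearMap.mul_apply]
      rw [this, ρ.isometT j j]
      simpa using hone
    · intro p p' u u' v v' hu hv hu' hv'
      have key : ∀ (w : List (Fin m)) (x : List (Fin n)),
          (wordOp ρ.S w * wordOp ρ.T x) (ρ.T j ζ)
            = wordOp ρ.S w (wordOp ρ.T (x ++ [j]) ζ) := by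
        intro w x
        rw [wordOp_append', wordOp_singleton']
        simp [ContinuousLinearMap.mul_apply]
      rw [key u v, key u' v']
      rw [ρ.main_eq hk hl hζ 0 1 p p' _ _ _ _
        (by simp [hu]) (by simp [hv]) (by simp [hu']) (by simp [hv'])]
      congr 1
      simp only [eq_iff_iff]
      constructor
      · rintro ⟨h1, h2⟩
        have hlen : v.length = v'.length := by
          have := congrArg List.length h2
          simpa using this
        exact ⟨h1, (List.append_inj h2 hlen).1⟩
      · rintro ⟨h1, h2⟩
        subst h1; subst h2; exact ⟨rfl, rfl⟩
end
end

section
/- Let (S,T) be a Cuntz-type atomic representation of F_θ^+ on H with standard basis {ξ_t}. Then for every standard basis vector ξ and every pair of nonnegative integers (k,l), there exist a word u of length k over {1,…,m}, a word v of length l over {1,…,n}, and a standard basis vector η such that S_uT_vη ∈ 𝕋ξ; moreover the triple (u, v, η) with this property is unique. -/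
noncomputable section

open scoped InnerProductSpace ComplexInnerProductSpace Classical

section AuxProofs

variable {H : Type*} [NormedAddCommGroup H] [InnerProductSpace ℂ H] [CompleteSpace H]
variable {Λ : Type*}

lemma aux_wordOp_nil {ι : Type*} (V : ι → H →L[ℂ] H) : wordOp V ([] : List ι) = 1 := rfl

lemma aux_wordOp_cons {ι : Type*} (V : ι → H →L[ℂ] H) (a : ι) (w : List ι) :
    wordOp V (a :: w) = V a * wordOp V w := by
  simp [wordOp]

lemma aux_fnWordOp_cons {ι : Type*} {k : ℕ} (V : ι → H →L[ℂ] H) (a : ι) (u : Fin k → ι) :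
    fnWordOp V (Fin.cons a u) = V a * fnWordOp V u := by
  simp [fnWordOp, List.ofFn_succ, aux_wordOp_cons]

lemma aux_fnWordOp_zero {ι : Type*} (V : ι → H →L[ℂ] H) (u : Fin 0 → ι) :
    fnWordOp V u = 1 := by
  simp [fnWordOp, aux_wordOp_nil]

lemma aux_inner_iso {ι : Type*} [DecidableEq ι] (V : ι → H →L[ℂ] H)
    (hiso : ∀ a b, star (V a) * V b = if a = b then 1 else 0) (a b : ι) (x y : H) :
    ⟪V a x, V b y⟫_ℂ = if a = b then ⟪x, y⟫_ℂ else 0 := by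
  have h : ⟪x, (star (V a) * V b) y⟫_ℂ = ⟪V a x, V b y⟫_ℂ := by
    rw [ContinuousLinearMap.mul_apply, ContinuousLinearMap.star_eq_adjoint,
      ContinuousLinearMap.adjoint_inner_right]
  rw [← h, hiso]
  split_ifs <;> simp

lemma aux_wordAtomic {ι : Type*} (ξ : HilbertBasis Λ ℂ H) (V : ι → H →L[ℂ] H)
    (hatom : ∀ a t, ∃ (c : ℂ) (t' : Λ), ‖c‖ = 1 ∧ V a (ξ t) = c • ξ t') :
    ∀ (w : List ι) (t : Λ), ∃ (c : ℂ) (t' : Λ), ‖c‖ = 1 ∧ wordOp V w (ξ t) = c • ξ t' := by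
  intro w
  induction w with
  | nil => exact fun t => ⟨1, t, by simp [aux_wordOp_nil]⟩
  | cons a w ih =>
    intro t
    obtain ⟨c, s, hc, hw⟩ := ih t
    obtain ⟨c', s', hc', hV⟩ := hatom a s
    refine ⟨c * c', s', by simp [hc, hc'], ?_⟩
    rw [aux_wordOp_cons, ContinuousLinearMap.mul_apply, hw, map_smul, hV, smul_smul]

lemma aux_oneStep {ι : Type*} [Fintype ι] [DecidableEq ι] (ξ : HilbertBasis Λ ℂ H) (V : ι → H →L[ℂ] H)
    (hiso : ∀ a b, star (V a) * V b = if a = b then 1 else 0)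
    (hsum : (∑ a, V a * star (V a)) = 1)
    (hatom : ∀ a t, ∃ (c : ℂ) (t' : Λ), ‖c‖ = 1 ∧ V a (ξ t) = c • ξ t') (t : Λ) :
    ∃! p : ι × Λ, ∃ c : ℂ, ‖c‖ = 1 ∧ V p.1 (ξ p.2) = c • ξ t := by
  have horth := orthonormal_iff_ite.mp ξ.orthonormal
  -- uniqueness key
  have key : ∀ p q : ι × Λ, (∃ c : ℂ, ‖c‖ = 1 ∧ V p.1 (ξ p.2) = c • ξ t) →
      (∃ c : ℂ, ‖c‖ = 1 ∧ V q.1 (ξ q.2) = c • ξ t) → p = q := by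
    rintro p q ⟨c, hc, hvc⟩ ⟨c', hc', hvc'⟩
    have hinner := aux_inner_iso V hiso p.1 q.1 (ξ p.2) (ξ q.2)
    rw [hvc, hvc', inner_smul_left, inner_smul_right, horth t t] at hinner
    have hcne : c ≠ 0 := by intro h; simp [h] at hc
    have hc'ne : c' ≠ 0 := by intro h; simp [h] at hc'
    have hne : (starRingEnd ℂ) c * (c' * if t = t then 1 else 0) ≠ 0 := by
      simp [hcne, hc'ne]
    rw [hinner] at hne
    have h1 : p.1 = q.1 := by by_contra h; simp [h] at hne
    have h2 : p.2 = q.2 := by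
      by_contra h
      rw [if_pos h1, horth p.2 q.2, if_neg h] at hne
      exact hne rfl
    exact Prod.ext h1 h2
  -- existence
  have h1 : ∑ a, ⟪ξ t, (V a * star (V a)) (ξ t)⟫_ℂ = 1 := by
    rw [← inner_sum, ← ContinuousLinearMap.sum_apply, hsum, ContinuousLinearMap.one_apply]
    simpa using horth t t
  have h2 : ∃ a, ⟪ξ t, (V a * star (V a)) (ξ t)⟫_ℂ ≠ 0 := by
    by_contra hcon
    push_neg at hcon
    rw [Finset.sum_eq_zero (fun a _ => hcon a)] at h1
    exact one_ne_zero h1.symm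
  obtain ⟨a, ha⟩ := h2
  set x : H := star (V a) (ξ t) with hx
  have hxne : x ≠ 0 := by
    intro h
    rw [ContinuousLinearMap.mul_apply, ← hx, h, map_zero, inner_zero_right] at ha
    exact ha rfl
  have h3 : ∃ t' : Λ, ⟪ξ t', x⟫_ℂ ≠ 0 := by
    by_contra hcon
    push_neg at hcon
    have : ξ.repr x = 0 := by
      ext i
      rw [ξ.repr_apply_apply]
      simpa using hcon i
    exact hxne (ξ.repr.map_eq_zero_iff.mp this)
  obtain ⟨t', ht'⟩ := h3
  have h4 : ⟪V a (ξ t'), ξ t⟫_ℂ ≠ 0 := by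
    rwa [hx, ContinuousLinearMap.star_eq_adjoint, ContinuousLinearMap.adjoint_inner_right] at ht'
  obtain ⟨c, s, hc, hV⟩ := hatom a t'
  have hst : s = t := by
    by_contra h
    rw [hV, inner_smul_left, horth s t, if_neg h, mul_zero] at h4
    exact h4 rfl
  refine ⟨(a, t'), ⟨c, hc, by rw [hV, hst]⟩, fun y hy => key y (a, t') hy ⟨c, hc, by rw [hV, hst]⟩⟩

lemma aux_finInd {ι : Type*} (ξ : HilbertBasis Λ ℂ H) (V : ι → H →L[ℂ] H)
    (hone : ∀ t, ∃! p : ι × Λ, ∃ c : ℂ, ‖c‖ = 1 ∧ V p.1 (ξ p.2) = c • ξ t)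
    {Q : Type*} (G : Q → H)
    (hGatom : ∀ q, ∃ (c : ℂ) (t' : Λ), ‖c‖ = 1 ∧ G q = c • ξ t')
    (hGbase : ∀ t, ∃! q : Q, ∃ c : ℂ, ‖c‖ = 1 ∧ G q = c • ξ t)
    (hVatom : ∀ a t, ∃ (c : ℂ) (t' : Λ), ‖c‖ = 1 ∧ V a (ξ t) = c • ξ t') :
    ∀ (k : ℕ) (t : Λ), ∃! w : (Fin k → ι) × Q,
      ∃ c : ℂ, ‖c‖ = 1 ∧ fnWordOp V w.1 (G w.2) = c • ξ t := by
  intro k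
  induction k with
  | zero =>
    intro t
    obtain ⟨q, ⟨c, hc, hq⟩, huniq⟩ := hGbase t
    refine ⟨(Fin.elim0, q), ⟨c, hc, by rw [aux_fnWordOp_zero]; simpa using hq⟩, ?_⟩
    rintro ⟨u, q'⟩ ⟨c', hc', hq'⟩
    rw [aux_fnWordOp_zero, ContinuousLinearMap.one_apply] at hq'
    have : q' = q := huniq q' ⟨c', hc', hq'⟩
    refine Prod.ext (funext fun i => i.elim0) this
  | succ k ih =>
    intro t
    obtain ⟨⟨a, t1⟩, ⟨c1, hc1, hv1⟩, hone_u⟩ := hone t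
    obtain ⟨⟨u', q⟩, ⟨c2, hc2, hv2⟩, hih_u⟩ := ih t1
    have hcand : fnWordOp V (Fin.cons a u') (G q) = (c2 * c1) • ξ t := by
      rw [aux_fnWordOp_cons, ContinuousLinearMap.mul_apply, hv2, map_smul, hv1, smul_smul]
    refine ⟨(Fin.cons a u', q), ⟨c2 * c1, by simp [hc1, hc2], hcand⟩, ?_⟩
    rintro ⟨u, q'⟩ ⟨c', hc', hq'⟩
    -- decompose u
    have hu : u = Fin.cons (u 0) (Fin.tail u) := (Fin.cons_self_tail u).symm
    obtain ⟨d, s, hd, hds⟩ : ∃ (d : ℂ) (s : Λ), ‖d‖ = 1 ∧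
        fnWordOp V (Fin.tail u) (G q') = d • ξ s := by
      obtain ⟨e, r, he, her⟩ := hGatom q'
      obtain ⟨f, s, hf, hfs⟩ := aux_wordAtomic ξ V hVatom (List.ofFn (Fin.tail u)) r
      exact ⟨e * f, s, by simp [he, hf], by
        rw [her, map_smul]
        show e • wordOp V (List.ofFn (Fin.tail u)) (ξ r) = _
        rw [hfs, smul_smul]⟩
    have hdne : d ≠ 0 := by intro h; simp [h] at hd
    have hstep : V (u 0) (ξ s) = (d⁻¹ * c') • ξ t := by
      have h5 : V (u 0) (d • ξ s) = c' • ξ t := by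
        rw [← hds, ← ContinuousLinearMap.mul_apply, ← aux_fnWordOp_cons, ← hu]
        exact hq'
      rw [map_smul] at h5
      rw [← smul_smul, ← h5, smul_smul, inv_mul_cancel₀ hdne, one_smul]
    have hat : (u 0, s) = (a, t1) := hone_u (u 0, s) ⟨d⁻¹ * c', by
      simp [norm_mul, norm_inv, hd, hc'], hstep⟩
    have h01 : u 0 = a := congrArg Prod.fst hat
    have hs1 : s = t1 := congrArg Prod.snd hat
    have htail : (Fin.tail u, q') = (u', q) := hih_u (Fin.tail u, q') ⟨d, hd, by rw [hds, hs1]⟩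
    have hteq : Fin.tail u = u' := congrArg Prod.fst htail
    have hqeq : q' = q := congrArg Prod.snd htail
    refine Prod.ext ?_ hqeq
    rw [hu, h01, hteq]

end AuxProofs
/-- In a Cuntz-type atomic representation, each basis vector has a unique incoming path of
each degree `(k, l)`. -/
theorem statement18 {m n : ℕ} (hm : 0 < m) (hn : 0 < n) (hmn : 2 ≤ m ∨ 2 ≤ n)
    {θ : Equiv.Perm (Fin m × Fin n)} {H : Type*}
    [NormedAddCommGroup H] [InnerProductSpace ℂ H] [CompleteSpace H]
    (ρ : TwoGraphRep m n θ H) (hCuntz : ρ.CuntzType)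
    {Λ : Type*} (ξ : HilbertBasis Λ ℂ H) (hAtomic : ρ.AtomicBasis ξ) :
    ∀ (t : Λ) (k l : ℕ), ∃! w : (Fin k → Fin m) × (Fin l → Fin n) × Λ,
      ∃ c : ℂ, ‖c‖ = 1 ∧ (fnWordOp ρ.S w.1 * fnWordOp ρ.T w.2.1) (ξ w.2.2) = c • ξ t := by
  intro t k l
  have horth := orthonormal_iff_ite.mp ξ.orthonormal
  have hSone := aux_oneStep ξ ρ.S ρ.isometS hCuntz.1 hAtomic.1
  have hTone := aux_oneStep ξ ρ.T ρ.isometT hCuntz.2 hAtomic.2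
  -- base: unique basis vector representation
  have hGbase0 : ∀ t : Λ, ∃! η : Λ, ∃ c : ℂ, ‖c‖ = 1 ∧ ξ η = c • ξ t := by
    intro t
    refine ⟨t, ⟨1, by simp⟩, ?_⟩
    rintro η ⟨c, hc, hη⟩
    by_contra h
    have h1 : ⟪ξ η, ξ η⟫_ℂ = 1 := by simpa using horth η η
    rw [hη, inner_smul_left, inner_smul_right, horth t t, if_pos rfl, mul_one] at h1
    have hcc : (starRingEnd ℂ) c * c = 1 := h1
    have h2 : ⟪ξ η, ξ t⟫_ℂ = 0 := by simpa [h] using horth η t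
    rw [hη, inner_smul_left, horth t t, if_pos rfl, mul_one] at h2
    rw [h2, zero_mul] at hcc
    exact one_ne_zero hcc.symm
  -- T-part
  have hTpart := aux_finInd ξ ρ.T hTone (fun η : Λ => ξ η) (fun η => ⟨1, η, by simp⟩)
    hGbase0 hAtomic.2 l
  -- main
  have hmain := aux_finInd ξ ρ.S hSone
    (fun w : (Fin l → Fin n) × Λ => fnWordOp ρ.T w.1 (ξ w.2))
    (fun w => aux_wordAtomic ξ ρ.T hAtomic.2 (List.ofFn w.1) w.2)
    (fun t' => hTpart t') hAtomic.1 k t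
  obtain ⟨⟨u, v, η⟩, ⟨c, hc, heq⟩, huniq⟩ := hmain
  refine ⟨(u, v, η), ⟨c, hc, heq⟩, ?_⟩
  rintro ⟨u', v', η'⟩ ⟨c', hc', heq'⟩
  exact huniq (u', v', η') ⟨c', hc', heq'⟩
end
end
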